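/- arXiv:2505.10077 — 8 statements merged into one kernel-verified Lean document; each statement's English description precedes it below -/
import Mathlib

section
/- Let $R$ be a commutative ring and let $a_1, a_2, a_3, a_4, a_{12}, a_{13}, a_{14}, a_{23}, a_{24}, a_{34} \in R$ satisfy the five torsor (Plücker) equations: $a_4a_{14} - a_3a_{13} + a_2a_{12} = 0$, $a_4a_{24} - a_3a_{23} + a_1a_{12} = 0$, $a_4a_{34} - a_2a_{23} + a_1a_{13} = 0$, $a_3a_{34} - a_2a_{24} + a_1a_{14} = 0$, $a_{12}a_{34} - a_{13}a_{24} + a_{23}a_{14} = 0$. Then the following four identities hold: $(a_2a_3a_{23})(a_1a_3a_{13} - a_1a_2a_{12}) = a_3a_4 \cdot a_1a_2a_{23}a_{14}$; $(a_1a_3a_{13})(a_2a_3a_{23} - a_1a_2a_{12}) = a_3a_4 \cdot a_1a_2a_{13}a_{24}$; $(a_2a_3a_{23})(a_2a_3a_{23} - a_1a_3a_{13}) = a_3a_4 \cdot a_2a_3a_{23}a_{34}$; $(a_1a_3a_{13})(a_2a_3a_{23} - a_1a_3a_{13}) = a_3a_4 \cdot a_1a_3a_{13}a_{34}$. (Equivalently: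 for every quadratic form $P$ in the set $\mathscr{P}_1 = \{Y_1(Y_2-Y_3),\ Y_2(Y_1-Y_3),\ Y_1(Y_1-Y_2),\ Y_2(Y_1-Y_2)\}$, the element $P(a_2a_3a_{23}, a_1a_3a_{13}, a_1a_2a_{12})$ is $a_3a_4$ times the corresponding monomial $a_1a_2a_{23}a_{14}$, $a_1a_2a_{13}a_{24}$, $a_2a_3a_{23}a_{34}$, $a_1a_3a_{13}a_{34}$ respectively.) -/
/-- If the ten coordinates satisfy the five Plücker (torsor) equations, then for every
quadratic form in `𝒫₁ = {Y₁(Y₂-Y₃), Y₂(Y₁-Y₃), Y₁(Y₁-Y₂), Y₂(Y₁-Y₂)}`, its value at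
`(a₂a₃a₂₃, a₁a₃a₁₃, a₁a₂a₁₂)` equals `a₃a₄` times the corresponding monomial. -/
theorem plucker_quadratic_identities
    (R : Type*) [CommRing R]
    (a1 a2 a3 a4 a12 a13 a14 a23 a24 a34 : R)
    (h1 : a4 * a14 - a3 * a13 + a2 * a12 = 0)
    (h2 : a4 * a24 - a3 * a23 + a1 * a12 = 0)
    (h3 : a4 * a34 - a2 * a23 + a1 * a13 = 0)
    (h4 : a3 * a34 - a2 * a24 + a1 * a14 = 0)
    (h5 : a12 * a34 - a13 * a24 + a23 * a14 = 0) :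
    (a2 * a3 * a23) * (a1 * a3 * a13 - a1 * a2 * a12) = a3 * a4 * (a1 * a2 * a23 * a14) ∧
    (a1 * a3 * a13) * (a2 * a3 * a23 - a1 * a2 * a12) = a3 * a4 * (a1 * a2 * a13 * a24) ∧
    (a2 * a3 * a23) * (a2 * a3 * a23 - a1 * a3 * a13) = a3 * a4 * (a2 * a3 * a23 * a34) ∧
    (a1 * a3 * a13) * (a2 * a3 * a23 - a1 * a3 * a13) = a3 * a4 * (a1 * a3 * a13 * a34) := by
  refine ⟨?_, ?_, ?_, ?_⟩
  · linear_combination (-(a1 * a2 * a3 * a23)) * h1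
  · linear_combination (-(a1 * a2 * a3 * a13)) * h2
  · linear_combination (-(a2 * a3 * a3 * a23)) * h3
  · linear_combination (-(a1 * a3 * a3 * a13)) * h3
end

section
/- Let $y_1, y_2, y_3$ be integers with $\gcd(y_1, y_2, y_3) = 1$. Then $\gcd\big(y_1(y_2-y_3),\ y_2(y_1-y_3),\ y_1(y_1-y_2),\ y_2(y_1-y_2)\big) = \gcd(y_1, y_2) \cdot \gcd(y_1 - y_2,\ y_1 - y_3)$, where all gcds are taken to be nonnegative. -/
/-- For coprime integers `y₁, y₂, y₃`, the gcd of the four values of the quadratic forms in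
`𝒫₁` at `(y₁, y₂, y₃)` equals `gcd(y₁, y₂) · gcd(y₁ - y₂, y₁ - y₃)`. -/
theorem gcd_of_P1_values
    (y1 y2 y3 : ℤ) (h : Int.gcd y1 (Int.gcd y2 y3) = 1) :
    Int.gcd (y1 * (y2 - y3))
      (Int.gcd (y2 * (y1 - y3))
        (Int.gcd (y1 * (y1 - y2)) (y2 * (y1 - y2)))) =
    Int.gcd y1 y2 * Int.gcd (y1 - y2) (y1 - y3) := by
  set d : ℕ := Int.gcd y1 y2 with hd
  set e : ℕ := Int.gcd (y1 - y2) (y1 - y3) with he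
  apply Nat.dvd_antisymm
  · -- LHS ∣ d * e
    set G : ℕ := Int.gcd (y1 * (y2 - y3))
      (Int.gcd (y2 * (y1 - y3)) (Int.gcd (y1 * (y1 - y2)) (y2 * (y1 - y2)))) with hG
    have h1 : (G : ℤ) ∣ y1 * (y2 - y3) := Int.gcd_dvd_left _ _
    have h2 : (G : ℤ) ∣ y2 * (y1 - y3) := dvd_trans (Int.gcd_dvd_right _ _) (Int.gcd_dvd_left _ _)
    have h3 : (G : ℤ) ∣ y1 * (y1 - y2) :=
      dvd_trans (Int.gcd_dvd_right _ _) (dvd_trans (Int.gcd_dvd_right _ _) (Int.gcd_dvd_left _ _))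
    have h4 : (G : ℤ) ∣ y2 * (y1 - y2) :=
      dvd_trans (Int.gcd_dvd_right _ _) (dvd_trans (Int.gcd_dvd_right _ _) (Int.gcd_dvd_right _ _))
    have h5 : (G : ℤ) ∣ y1 * (y1 - y3) := by
      have : y1 * (y1 - y3) = y1 * (y1 - y2) + y1 * (y2 - y3) := by ring
      rw [this]; exact dvd_add h3 h1
    have hA : G ∣ d * (y1 - y2).natAbs := by
      have := Int.dvd_coe_gcd h3 h4
      rwa [Int.gcd_mul_right, Int.natCast_dvd_natCast] at this
    have hB : G ∣ d * (y1 - y3).natAbs := by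
      have := Int.dvd_coe_gcd h5 h2
      rwa [Int.gcd_mul_right, Int.natCast_dvd_natCast] at this
    have : G ∣ Nat.gcd (d * (y1 - y2).natAbs) (d * (y1 - y3).natAbs) :=
      Nat.dvd_gcd hA hB
    rwa [Nat.gcd_mul_left] at this
  · -- d * e ∣ LHS
    have hd1 : (d : ℤ) ∣ y1 := Int.gcd_dvd_left _ _
    have hd2 : (d : ℤ) ∣ y2 := Int.gcd_dvd_right _ _
    have he1 : (e : ℤ) ∣ y1 - y2 := Int.gcd_dvd_left _ _
    have he2 : (e : ℤ) ∣ y1 - y3 := Int.gcd_dvd_right _ _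
    have he3 : (e : ℤ) ∣ y2 - y3 := by
      have : y2 - y3 = (y1 - y3) - (y1 - y2) := by ring
      rw [this]; exact dvd_sub he2 he1
    have key : ((d * e : ℕ) : ℤ) = (d : ℤ) * e := by push_cast; ring
    rw [← Int.natCast_dvd_natCast]
    push_cast
    refine Int.dvd_coe_gcd (mul_dvd_mul hd1 he3) ?_
    refine Int.dvd_coe_gcd (mul_dvd_mul hd2 he2) ?_
    exact Int.dvd_coe_gcd (mul_dvd_mul hd1 he1) (mul_dvd_mul hd2 he1)
end

section
/- Let $C \ge 0$ be a real number and let $z_{12}, z_{13}, z_{14}, z_{23}, z_{24}, z_{34}$ be complex numbers satisfying the scaled torsor equations $z_{14} - z_{13} + z_{12} = 0$, $z_{24} - z_{23} + z_{12} = 0$, $z_{34} - z_{23} + z_{13} = 0$, together with the bounds $|z_{13} z_{14}| \le C$, $|z_{23} z_{24}| \le C$, and $|z_{12}| \le 1$. Then $|z_{12}|, |z_{13}|, |z_{14}|, |z_{23}|, |z_{24}|, |z_{34}|$ are all at most $2(\sqrt{C} + 1)$. -/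
lemma aux_bound (C : ℝ) (hC : 0 ≤ C) (a b : ℂ)
    (hab : ‖a * b‖ ≤ C) (hd : ‖a - b‖ ≤ 1) :
    ‖a‖ ≤ Real.sqrt C + 1 := by
  have hs : 0 ≤ Real.sqrt C := Real.sqrt_nonneg C
  by_contra h
  push_neg at h
  have hx : ‖a‖ > Real.sqrt C + 1 := h
  have hy : ‖b‖ ≥ ‖a‖ - 1 := by
    have := norm_sub_le a b  -- maybe not; use triangle
    have h2 : ‖a‖ ≤ ‖a - b‖ + ‖b‖ := by
      calc ‖a‖ = ‖(a - b) + b‖ := by ring_nf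
        _ ≤ ‖a - b‖ + ‖b‖ := norm_add_le _ _
    linarith
  have hmul : ‖a‖ * ‖b‖ ≤ C := by
    rwa [norm_mul] at hab
  have hsq : Real.sqrt C * Real.sqrt C = C := Real.mul_self_sqrt hC
  have hbnn : (0:ℝ) ≤ ‖b‖ := norm_nonneg b
  nlinarith [norm_nonneg a]

/-- If the rescaled coordinates satisfy the scaled torsor equations, the height bounds
`|z₁₃z₁₄| ≤ C`, `|z₂₃z₂₄| ≤ C` and the normalization `|z₁₂| ≤ 1`, then all six coordinates
are bounded by `2(√C + 1)`. -/
theorem rescaled_coordinates_bounded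
    (C : ℝ) (hC : 0 ≤ C)
    (z12 z13 z14 z23 z24 z34 : ℂ)
    (h1 : z14 - z13 + z12 = 0)
    (h2 : z24 - z23 + z12 = 0)
    (h3 : z34 - z23 + z13 = 0)
    (hb1 : ‖z13 * z14‖ ≤ C)
    (hb2 : ‖z23 * z24‖ ≤ C)
    (hb3 : ‖z12‖ ≤ 1) :
    ‖z12‖ ≤ 2 * (Real.sqrt C + 1) ∧
    ‖z13‖ ≤ 2 * (Real.sqrt C + 1) ∧
    ‖z14‖ ≤ 2 * (Real.sqrt C + 1) ∧
    ‖z23‖ ≤ 2 * (Real.sqrt C + 1) ∧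
    ‖z24‖ ≤ 2 * (Real.sqrt C + 1) ∧
    ‖z34‖ ≤ 2 * (Real.sqrt C + 1) := by
  have hs : 0 ≤ Real.sqrt C := Real.sqrt_nonneg C
  have e13 : ‖z13 - z14‖ ≤ 1 := by
    have : z13 - z14 = z12 := by linear_combination -h1
    rw [this]; exact hb3
  have e14 : ‖z14 - z13‖ ≤ 1 := by
    have : z14 - z13 = -z12 := by linear_combination h1
    rw [this, norm_neg]; exact hb3
  have e23 : ‖z23 - z24‖ ≤ 1 := by
    have : z23 - z24 = z12 := by linear_combination -h2
    rw [this]; exact hb3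
  have e24 : ‖z24 - z23‖ ≤ 1 := by
    have : z24 - z23 = -z12 := by linear_combination h2
    rw [this, norm_neg]; exact hb3
  have b13 := aux_bound C hC z13 z14 hb1 e13
  have b14 := aux_bound C hC z14 z13 (by rwa [mul_comm] at hb1) e14
  have b23 := aux_bound C hC z23 z24 hb2 e23
  have b24 := aux_bound C hC z24 z23 (by rwa [mul_comm] at hb2) e24
  have b34 : ‖z34‖ ≤ 2 * (Real.sqrt C + 1) := by
    have : z34 = z23 - z13 := by linear_combination h3
    rw [this]
    calc ‖z23 - z13‖ ≤ ‖z23‖ + ‖z13‖ :=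
          norm_sub_le _ _
      _ ≤ 2 * (Real.sqrt C + 1) := by linarith
  refine ⟨by linarith, by linarith, by linarith, by linarith, by linarith, b34⟩
end

section
/- Let $Q_1, \dots, Q_m$ ($m \ge 1$) be real quadratic forms in two variables (homogeneous polynomials of degree 2 in $\mathbb{R}[Y_1, Y_2]$) such that $\max_{1 \le i \le m} |Q_i(y)| > 0$ for every $y \in \mathbb{R}^2 \setminus \{0\}$. Then $\int_{\mathbb{R}} \Big(\max_{1 \le i \le m} |Q_i(y, 1)|\Big)^{-1} \, dy = \operatorname{vol}\Big\{(y_1, y_2) \in \mathbb{R}^2 : \max_{1 \le i \le m} |Q_i(y_1, y_2)| \le 1\Big\}$, where the left-hand side is a convergent Lebesgue integral and the right-hand side is the Lebesgue measure of the given set. -/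
open MeasureTheory

/-- Auxiliary: for a continuous, 2-homogeneous `M : ℝ × ℝ → ℝ` positive off the origin. -/
theorem aux_density (M : ℝ × ℝ → ℝ) (hMcont : Continuous M)
    (hMhom : ∀ (s : ℝ) (y : ℝ × ℝ), M (s * y.1, s * y.2) = s ^ 2 * M y)
    (hMpos : ∀ y : ℝ × ℝ, y ≠ 0 → 0 < M y) :
    Integrable (fun t : ℝ => (M (t, 1))⁻¹) ∧
    ∫ t : ℝ, (M (t, 1))⁻¹ = (volume {p : ℝ × ℝ | M p ≤ 1}).toReal := by
  have hfpos : ∀ t : ℝ, 0 < M (t, 1) := fun t =>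
    hMpos (t, 1) (by simp [Prod.ext_iff])
  have hfcont : Continuous fun t : ℝ => M (t, 1) :=
    hMcont.comp (continuous_id.prodMk continuous_const)
  -- lower bound c0 * (t^2+1) ≤ M (t,1)
  have hc : ∃ c0 : ℝ, 0 < c0 ∧ ∀ t : ℝ, c0 * (t ^ 2 + 1) ≤ M (t, 1) := by
    obtain ⟨z, hz, hmin⟩ := (isCompact_sphere (0 : ℝ × ℝ) 1).exists_isMinOn
      ⟨((1 : ℝ), (0 : ℝ)), by simp [Prod.norm_def]⟩ hMcont.continuousOn
    have hz0 : z ≠ 0 := by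
      intro h
      rw [h, mem_sphere_zero_iff_norm] at hz
      simp at hz
    have hMz : 0 < M z := hMpos z hz0
    refine ⟨M z / 2, by positivity, fun t => ?_⟩
    set s : ℝ := max |t| 1 with hs
    have hs1 : (1 : ℝ) ≤ s := le_max_right _ _
    have hst : |t| ≤ s := le_max_left _ _
    have hspos : 0 < s := lt_of_lt_of_le one_pos hs1
    have hmem : (s⁻¹ * t, s⁻¹ * 1) ∈ Metric.sphere (0 : ℝ × ℝ) 1 := by
      rw [mem_sphere_zero_iff_norm]
      have : ‖((s⁻¹ * t, s⁻¹ * 1) : ℝ × ℝ)‖ = max (s⁻¹ * |t|) (s⁻¹ * 1) := by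
        rw [Prod.norm_def]
        simp [Real.norm_eq_abs, abs_mul, abs_inv, abs_of_pos hspos]
      rw [this, ← mul_max_of_nonneg _ _ (inv_pos.2 hspos).le, ← hs,
        inv_mul_cancel₀ hspos.ne']
    have hM1 : M (t, 1) = s ^ 2 * M (s⁻¹ * t, s⁻¹ * 1) := by
      have := hMhom s (s⁻¹ * t, s⁻¹ * 1)
      simp only [← mul_assoc, mul_inv_cancel₀ hspos.ne', one_mul] at this
      rw [← this]
    have hmge : M z ≤ M (s⁻¹ * t, s⁻¹ * 1) := hmin hmem
    have hsq : t ^ 2 + 1 ≤ 2 * s ^ 2 := by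
      have h1 : t ^ 2 ≤ s ^ 2 := by nlinarith [abs_nonneg t, sq_abs t]
      nlinarith
    nlinarith [mul_le_mul_of_nonneg_left hmge (sq_nonneg s)]
  obtain ⟨c0, hc0, hb⟩ := hc
  -- integrability
  have hint : Integrable (fun t : ℝ => (M (t, 1))⁻¹) := by
    refine Integrable.mono' (integrable_inv_one_add_sq.const_mul c0⁻¹)
      ((hfcont.inv₀ fun t => (hfpos t).ne').aestronglyMeasurable)
      (Filter.Eventually.of_forall fun t => ?_)
    rw [Real.norm_eq_abs, abs_of_nonneg (inv_nonneg.2 (hfpos t).le)]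
    have h1 : (0 : ℝ) < c0 * (t ^ 2 + 1) := by positivity
    calc (M (t, 1))⁻¹ ≤ (c0 * (t ^ 2 + 1))⁻¹ := inv_anti₀ h1 (hb t)
      _ = c0⁻¹ * (1 + t ^ 2)⁻¹ := by rw [mul_inv, add_comm]
  -- the key lintegral identity
  have hSmeas : MeasurableSet {p : ℝ × ℝ | M p ≤ 1} :=
    (isClosed_le hMcont continuous_const).measurableSet
  set F : ℝ × ℝ → ENNReal :=
    ({p : ℝ × ℝ | M (p.1 * p.2, p.2) ≤ 1}).indicator fun q => ENNReal.ofReal |q.2| with hF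
  have hAmeas : MeasurableSet {p : ℝ × ℝ | M (p.1 * p.2, p.2) ≤ 1} := by
    refine (isClosed_le (hMcont.comp ?_) continuous_const).measurableSet
    exact (continuous_fst.mul continuous_snd).prodMk continuous_snd
  have hFmeas : Measurable F :=
    (ENNReal.measurable_ofReal.comp
      (continuous_abs.comp continuous_snd).measurable).indicator hAmeas
  have key1 : ∫⁻ t : ℝ, ENNReal.ofReal ((M (t, 1))⁻¹) = ∫⁻ p : ℝ × ℝ, F p := by
    rw [Measure.volume_eq_prod, lintegral_prod _ hFmeas.aemeasurable]
    refine (lintegral_congr fun t => ?_).symm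
    set r : ℝ := Real.sqrt ((M (t, 1))⁻¹) with hr
    have hrpos : 0 < r := Real.sqrt_pos.2 (inv_pos.2 (hfpos t))
    have hstep : (fun u : ℝ => F (t, u)) =
        (Set.Icc (-r) r).indicator fun u => ENNReal.ofReal |u| := by
      funext u
      have hm : M (t * u, u) = u ^ 2 * M (t, 1) := by
        have := hMhom u (t, 1)
        simpa [mul_comm] using this
      have hmem : (u ∈ Set.Icc (-r) r) ↔ M (t * u, u) ≤ 1 := by
        rw [hm, Set.mem_Icc, ← abs_le]
        constructor
        · intro h
          have h2 : u ^ 2 ≤ (M (t, 1))⁻¹ := by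
            rw [← Real.sq_sqrt (inv_nonneg.2 (hfpos t).le), ← hr, ← sq_abs]
            exact pow_le_pow_left₀ (abs_nonneg u) h 2
          calc u ^ 2 * M (t, 1) ≤ (M (t, 1))⁻¹ * M (t, 1) :=
                mul_le_mul_of_nonneg_right h2 (hfpos t).le
            _ = 1 := inv_mul_cancel₀ (hfpos t).ne'
        · intro h
          have h2 : u ^ 2 ≤ (M (t, 1))⁻¹ := by
            rw [← one_div, le_div_iff₀ (hfpos t)]
            exact h
          rw [hr, ← sq_abs] at *
          exact (Real.le_sqrt (abs_nonneg u) (inv_nonneg.2 (hfpos t).le)).2 h2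
      simp only [hF, Set.indicator, Set.mem_setOf_eq, hmem]
    rw [hstep, lintegral_indicator measurableSet_Icc]
    have hintOn : IntegrableOn (fun u : ℝ => |u|) (Set.Icc (-r) r) :=
      continuous_abs.integrableOn_Icc
    rw [← ofReal_integral_eq_lintegral_ofReal hintOn
      (Filter.Eventually.of_forall fun u => abs_nonneg u)]
    congr 1
    have hval : ∫ u in Set.Icc (-r) r, |u| = r ^ 2 := by
      rw [integral_Icc_eq_integral_Ioc,
        ← intervalIntegral.integral_of_le (by linarith : -r ≤ r)]
      have hi1 : IntervalIntegrable (fun u : ℝ => |u|) volume (-r) 0 :=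
        continuous_abs.intervalIntegrable _ _
      have hi2 : IntervalIntegrable (fun u : ℝ => |u|) volume 0 r :=
        continuous_abs.intervalIntegrable _ _
      have h1 : ∫ u in (0 : ℝ)..r, |u| = r ^ 2 / 2 := by
        rw [intervalIntegral.integral_congr (g := fun x : ℝ => x)
          (fun x hx => ?_), integral_id]
        · ring
        · rw [Set.uIcc_of_le hrpos.le] at hx
          exact abs_of_nonneg hx.1
      have h2 : ∫ u in (-r)..(0 : ℝ), |u| = r ^ 2 / 2 := by
        rw [intervalIntegral.integral_congr (g := fun x : ℝ => -x)
          (fun x hx => ?_)]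
        · rw [intervalIntegral.integral_neg, integral_id]
          ring
        · rw [Set.uIcc_of_le (by linarith : -r ≤ (0:ℝ))] at hx
          exact abs_of_nonpos hx.2
      rw [← intervalIntegral.integral_add_adjacent_intervals hi1 hi2, h1, h2]
      ring
    rw [hval, hr, Real.sq_sqrt (inv_nonneg.2 (hfpos t).le)]
  have key2 : ∫⁻ p : ℝ × ℝ, F p = volume {p : ℝ × ℝ | M p ≤ 1} := by
    rw [Measure.volume_eq_prod, lintegral_prod_symm _ hFmeas.aemeasurable,
      Measure.prod_apply_symm hSmeas]
    refine lintegral_congr_ae ?_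
    have h0 : ∀ᵐ u : ℝ, u ≠ 0 := by
      rw [MeasureTheory.ae_iff]
      simp
    filter_upwards [h0] with u hu
    have hclosed : MeasurableSet {x : ℝ | M (x, u) ≤ 1} :=
      (isClosed_le (hMcont.comp (continuous_id.prodMk continuous_const))
        continuous_const).measurableSet
    have hmeasu : MeasurableSet ((· * u) ⁻¹' {x : ℝ | M (x, u) ≤ 1}) :=
      hclosed.preimage (measurable_mul_const u)
    have hstep : (fun t : ℝ => F (t, u)) =
        ((· * u) ⁻¹' {x : ℝ | M (x, u) ≤ 1}).indicator fun _ => ENNReal.ofReal |u| := by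
      funext t
      simp only [hF, Set.indicator, Set.mem_setOf_eq, Set.mem_preimage]
    rw [hstep, lintegral_indicator hmeasu, setLIntegral_const,
      Real.volume_preimage_mul_right hu, ← mul_assoc,
      ← ENNReal.ofReal_mul (abs_nonneg u), ← abs_mul, mul_inv_cancel₀ hu, abs_one,
      ENNReal.ofReal_one, one_mul]
    rfl
  constructor
  · exact hint
  · rw [integral_eq_lintegral_of_nonneg_ae
      (Filter.Eventually.of_forall fun t => inv_nonneg.2 (hfpos t).le)
      ((hfcont.inv₀ fun t => (hfpos t).ne').aestronglyMeasurable),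
      key1, key2]

/-- For a finite family of binary real quadratic forms
`Q i (y₁, y₂) = a i · y₁² + b i · y₁y₂ + c i · y₂²` whose maximum is positive away from the
origin, the integral `∫ (max_i |Q i (y, 1)|)⁻¹ dy` converges and equals the area of the
region `{(y₁, y₂) : max_i |Q i (y₁, y₂)| ≤ 1}`. -/
theorem real_density_integral_eq_volume
    (m : ℕ) (hm : 1 ≤ m) (a b c : Fin m → ℝ)
    (hpos : ∀ y : ℝ × ℝ, y ≠ 0 →
      0 < ⨆ i, |a i * y.1 ^ 2 + b i * (y.1 * y.2) + c i * y.2 ^ 2|) :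
    Integrable (fun y : ℝ => (⨆ i, |a i * y ^ 2 + b i * y + c i|)⁻¹) ∧
    ∫ y : ℝ, (⨆ i, |a i * y ^ 2 + b i * y + c i|)⁻¹ =
      (volume {p : ℝ × ℝ |
        (⨆ i, |a i * p.1 ^ 2 + b i * (p.1 * p.2) + c i * p.2 ^ 2|) ≤ 1}).toReal := by
  haveI : Nonempty (Fin m) := Fin.pos_iff_nonempty.mp hm
  have hMcont : Continuous
      (fun y : ℝ × ℝ => ⨆ i, |a i * y.1 ^ 2 + b i * (y.1 * y.2) + c i * y.2 ^ 2|) := by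
    have heq : (fun y : ℝ × ℝ => ⨆ i, |a i * y.1 ^ 2 + b i * (y.1 * y.2) + c i * y.2 ^ 2|)
        = fun y : ℝ × ℝ => Finset.univ.sup' Finset.univ_nonempty
          (fun i => (fun y : ℝ × ℝ =>
            |a i * y.1 ^ 2 + b i * (y.1 * y.2) + c i * y.2 ^ 2|) y) :=
      funext fun y => (Finset.sup'_univ_eq_ciSup _).symm
    rw [heq, continuous_iff_continuousAt]
    intro x
    exact ContinuousAt.finset_sup'_apply Finset.univ_nonempty fun i _ =>
      (Continuous.abs (by fun_prop)).continuousAt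
  have hMhom : ∀ (s : ℝ) (y : ℝ × ℝ),
      (fun y : ℝ × ℝ => ⨆ i, |a i * y.1 ^ 2 + b i * (y.1 * y.2) + c i * y.2 ^ 2|)
        (s * y.1, s * y.2)
      = s ^ 2 * (fun y : ℝ × ℝ =>
          ⨆ i, |a i * y.1 ^ 2 + b i * (y.1 * y.2) + c i * y.2 ^ 2|) y := by
    intro s y
    show (⨆ i, |a i * (s * y.1) ^ 2 + b i * (s * y.1 * (s * y.2)) + c i * (s * y.2) ^ 2|)
      = s ^ 2 * ⨆ i, |a i * y.1 ^ 2 + b i * (y.1 * y.2) + c i * y.2 ^ 2|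
    rw [Real.mul_iSup_of_nonneg (sq_nonneg s)]
    refine iSup_congr fun i => ?_
    rw [show a i * (s * y.1) ^ 2 + b i * (s * y.1 * (s * y.2)) + c i * (s * y.2) ^ 2
        = s ^ 2 * (a i * y.1 ^ 2 + b i * (y.1 * y.2) + c i * y.2 ^ 2) by ring,
      abs_mul, abs_of_nonneg (sq_nonneg s)]
  obtain ⟨h1, h2⟩ := aux_density
    (fun y : ℝ × ℝ => ⨆ i, |a i * y.1 ^ 2 + b i * (y.1 * y.2) + c i * y.2 ^ 2|)
    hMcont hMhom hpos
  have hiSup : (fun y : ℝ => (⨆ i, |a i * y ^ 2 + b i * y + c i|)⁻¹)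
      = fun t : ℝ => ((fun y : ℝ × ℝ =>
          ⨆ i, |a i * y.1 ^ 2 + b i * (y.1 * y.2) + c i * y.2 ^ 2|) (t, 1))⁻¹ := by
    funext t
    congr 1
    exact iSup_congr fun i => by norm_num
  constructor
  · rw [hiSup]; exact h1
  · rw [show (∫ y : ℝ, (⨆ i, |a i * y ^ 2 + b i * y + c i|)⁻¹)
        = ∫ t : ℝ, ((fun y : ℝ × ℝ =>
            ⨆ i, |a i * y.1 ^ 2 + b i * (y.1 * y.2) + c i * y.2 ^ 2|) (t, 1))⁻¹ from by
      rw [← hiSup]]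
    exact h2
end

section
/- Let $Q_1, \dots, Q_m$ ($m \ge 1$) be quadratic forms in two variables with complex coefficients (homogeneous polynomials of degree 2 in $\mathbb{C}[Y_1, Y_2]$) such that $\max_{1 \le i \le m} |Q_i(z)| > 0$ for every $z \in \mathbb{C}^2 \setminus \{0\}$. Then $\int_{\mathbb{C}} \Big(\max_{1 \le i \le m} |Q_i(y, 1)|\Big)^{-2} \, d\lambda(y) = \frac{2}{\pi} \operatorname{vol}\Big\{(z_1, z_2) \in \mathbb{C}^2 : \max_{1 \le i \le m} |Q_i(z_1, z_2)| \le 1\Big\}$, where $\lambda$ is Lebesgue measure on $\mathbb{C} \cong \mathbb{R}^2$ and the volume on the right is Lebesgue measure on $\mathbb{C}^2 \cong \mathbb{R}^4$. -/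
open MeasureTheory Set ENNReal

noncomputable section

namespace CDAux


lemma continuous_sup'_comp {ι X : Type*} [TopologicalSpace X] (s : Finset ι) (hs : s.Nonempty)
    (f : ι → X → ℝ) (hf : ∀ i, Continuous (f i)) :
    Continuous fun x => s.sup' hs fun i => f i x := by
  induction hs using Finset.Nonempty.cons_induction with
  | singleton i => exact hf i
  | cons i s hi hne ih =>
      have : ∀ x, (Finset.cons i s hi).sup' (Finset.cons_nonempty hi) (fun j => f j x)
          = f i x ⊔ s.sup' hne (fun j => f j x) := fun x => Finset.sup'_cons hne _
      simp only [this]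
      exact (hf i).max ih

lemma integral_normSq_closedBall (R : ℝ) (hR : 0 ≤ R) :
    ∫ w : ℂ in Metric.closedBall 0 R, Complex.normSq w = Real.pi / 2 * R ^ 4 := by
  have h1 : ∀ w : ℂ, (Metric.closedBall (0:ℂ) R).indicator Complex.normSq w
      = (fun r : ℝ => if r ≤ R then r ^ 2 else 0) ‖w‖ := by
    intro w
    by_cases h : ‖w‖ ≤ R
    · rw [Set.indicator_of_mem (by simpa [Metric.mem_closedBall, dist_zero_right] using h)]
      simp only [if_pos h]
      rw [Complex.normSq_eq_norm_sq]
    · rw [Set.indicator_of_notMem (by simpa [Metric.mem_closedBall, dist_zero_right] using h)]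
      simp only [if_neg h]
  rw [← MeasureTheory.integral_indicator measurableSet_closedBall]
  rw [show (Metric.closedBall (0:ℂ) R).indicator Complex.normSq
      = fun w : ℂ => (fun r : ℝ => if r ≤ R then r ^ 2 else 0) ‖w‖ from funext h1]
  rw [MeasureTheory.integral_fun_norm_addHaar volume (fun r : ℝ => if r ≤ R then r ^ 2 else 0)]
  have hdim : Module.finrank ℝ ℂ = 2 := Complex.finrank_real_complex
  rw [hdim]
  have hball : volume.real (Metric.ball (0:ℂ) 1) = Real.pi := by
    rw [measureReal_def, Complex.volume_ball]
    simp
  rw [hball]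
  have hinner : ∫ y in Ioi (0:ℝ), y ^ (2 - 1) • (if y ≤ R then y ^ 2 else 0)
      = R ^ 4 / 4 := by
    have : ∀ y : ℝ, y ^ (2-1) • (if y ≤ R then y ^ 2 else 0)
        = (Iic R).indicator (fun y => y ^ 3) y := by
      intro y
      by_cases h : y ≤ R <;> simp [h, Set.indicator, pow_succ, smul_eq_mul] <;> ring
    rw [show (fun y : ℝ => y ^ (2-1) • (if y ≤ R then y ^ 2 else 0))
        = fun y => (Iic R).indicator (fun y => y ^ 3) y from funext this]
    rw [MeasureTheory.setIntegral_indicator measurableSet_Iic, Set.Ioi_inter_Iic,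
      ← intervalIntegral.integral_of_le hR]
    simp [integral_pow]
    norm_num
  rw [hinner]
  simp only [nsmul_eq_mul, smul_eq_mul]
  ring


lemma lintegral_normSq_closedBall (R : ℝ) (hR : 0 ≤ R) :
    ∫⁻ w : ℂ in Metric.closedBall 0 R, ENNReal.ofReal (Complex.normSq w) =
      ENNReal.ofReal (Real.pi / 2 * R ^ 4) := by
  rw [← integral_normSq_closedBall R hR, ← MeasureTheory.ofReal_integral_eq_lintegral_ofReal]
  · exact (Complex.continuous_normSq.continuousOn).integrableOn_compact
      (isCompact_closedBall _ _)
  · exact Filter.Eventually.of_forall fun w => Complex.normSq_nonneg w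

lemma det_phi_deriv (y w : ℂ) :
    ((y • ContinuousLinearMap.snd ℝ ℂ ℂ + w • ContinuousLinearMap.fst ℝ ℂ ℂ).prod
      (ContinuousLinearMap.snd ℝ ℂ ℂ)).det = Complex.normSq w := by
  set B := Complex.basisOneI with hB
  set L := ((y • ContinuousLinearMap.snd ℝ ℂ ℂ + w • ContinuousLinearMap.fst ℝ ℂ ℂ).prod
      (ContinuousLinearMap.snd ℝ ℂ ℂ)) with hL
  have e1 : ∀ j : Fin 2, (B.prod B) (Sum.inl j) = (B j, 0) :=
    fun j => Prod.ext (Module.Basis.prod_apply_inl_fst _ _ _) (Module.Basis.prod_apply_inl_snd _ _ _)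
  have e2 : ∀ j : Fin 2, (B.prod B) (Sum.inr j) = (0, B j) :=
    fun j => Prod.ext (Module.Basis.prod_apply_inr_fst _ _ _) (Module.Basis.prod_apply_inr_snd _ _ _)
  have hmat : LinearMap.toMatrix (B.prod B) (B.prod B) (L : ℂ × ℂ →ₗ[ℝ] ℂ × ℂ) =
      Matrix.fromBlocks (Algebra.leftMulMatrix B w) (Algebra.leftMulMatrix B y) 0 1 := by
    ext i j
    rcases i with i | i <;> rcases j with j | j
    · rw [LinearMap.toMatrix_apply, e1, Matrix.fromBlocks_apply₁₁,
        Algebra.leftMulMatrix_eq_repr_mul]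
      simp [hL, smul_eq_mul]
    · rw [LinearMap.toMatrix_apply, e2, Matrix.fromBlocks_apply₁₂,
        Algebra.leftMulMatrix_eq_repr_mul]
      simp [hL, smul_eq_mul]
    · rw [LinearMap.toMatrix_apply, e1, Matrix.fromBlocks_apply₂₁]
      simp [hL]
    · rw [LinearMap.toMatrix_apply, e2, Matrix.fromBlocks_apply₂₂]
      simp [hL, Module.Basis.repr_self, Finsupp.single_apply, Matrix.one_apply, eq_comm]
  show LinearMap.det (L : ℂ × ℂ →ₗ[ℝ] ℂ × ℂ) = Complex.normSq w
  rw [← LinearMap.det_toMatrix (B.prod B), hmat, Matrix.det_fromBlocks_zero₂₁,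
    Matrix.det_one, mul_one, hB, Algebra.leftMulMatrix_complex, Matrix.det_fin_two_of,
    Complex.normSq_apply]
  ring

end CDAux

open CDAux


/-- For a finite family of binary quadratic forms over `ℂ`,
`Q i (z₁, z₂) = a i · z₁² + b i · z₁z₂ + c i · z₂²`, whose maximum modulus is positive away
from the origin, `∫_ℂ (max_i |Q i (y, 1)|)⁻² dλ(y) = (2/π) vol{(z₁,z₂) : max_i |Q i (z₁,z₂)| ≤ 1}`. -/
theorem complex_density_integral_eq_volume
    (m : ℕ) (hm : 1 ≤ m) (a b c : Fin m → ℂ)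
    (hpos : ∀ z : ℂ × ℂ, z ≠ 0 →
      0 < ⨆ i, ‖a i * z.1 ^ 2 + b i * (z.1 * z.2) + c i * z.2 ^ 2‖) :
    ∫ y : ℂ, ((⨆ i, ‖a i * y ^ 2 + b i * y + c i‖) ^ 2)⁻¹ =
      (2 / Real.pi) * (volume {p : ℂ × ℂ |
        (⨆ i, ‖a i * p.1 ^ 2 + b i * (p.1 * p.2) + c i * p.2 ^ 2‖) ≤ 1}).toReal := by
  haveI : Nonempty (Fin m) := ⟨⟨0, hm⟩⟩
  set Q : Fin m → ℂ × ℂ → ℂ :=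
    fun i z => a i * z.1 ^ 2 + b i * (z.1 * z.2) + c i * z.2 ^ 2 with hQ
  set M : ℂ × ℂ → ℝ := fun z => ⨆ i, ‖Q i z‖ with hMdef
  -- basic facts about M
  have hsup : ∀ z, M z = Finset.univ.sup' Finset.univ_nonempty
      fun i => ‖Q i z‖ := fun z => (Finset.sup'_univ_eq_ciSup _).symm
  have hMcont : Continuous M := by
    rw [show M = fun z => Finset.univ.sup' Finset.univ_nonempty
        (fun i => ‖Q i z‖) from funext hsup]
    refine continuous_sup'_comp _ _ _ fun i => continuous_norm.comp ?_
    fun_prop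
  have hMnonneg : ∀ z, 0 ≤ M z := by
    intro z
    refine le_ciSup_of_le (Set.Finite.bddAbove (Set.finite_range _)) ⟨0, hm⟩ ?_
    exact norm_nonneg _
  have hMhom : ∀ (t : ℂ) (z : ℂ × ℂ), M (t * z.1, t * z.2) = Complex.normSq t * M z := by
    intro t z
    have hq : ∀ i, ‖Q i (t * z.1, t * z.2)‖
        = Complex.normSq t * ‖Q i z‖ := by
      intro i
      have h1 : Q i (t * z.1, t * z.2) = t ^ 2 * Q i z := by simp only [hQ]; ring
      rw [h1, norm_mul, norm_pow, Complex.sq_norm]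
    simp only [hMdef, hq]
    rw [← Real.mul_iSup_of_nonneg (Complex.normSq_nonneg t)]
  have hM1pos : ∀ y : ℂ, 0 < M (y, 1) := by
    intro y
    exact hpos (y, 1) (fun h => one_ne_zero (congrArg Prod.snd h))
  -- lower bound via compactness
  obtain ⟨δ, hδpos, hδ⟩ : ∃ δ > 0, ∀ z : ℂ × ℂ, δ * ‖z‖ ^ 2 ≤ M z := by
    have hposM : ∀ z : ℂ × ℂ, z ≠ 0 → 0 < M z := hpos
    have hsph : IsCompact (Metric.sphere (0 : ℂ × ℂ) 1) := isCompact_sphere 0 1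
    have hne : (Metric.sphere (0 : ℂ × ℂ) 1).Nonempty :=
      NormedSpace.sphere_nonempty.mpr zero_le_one
    obtain ⟨z₀, hz₀mem, hz₀min⟩ := hsph.exists_isMinOn hne hMcont.continuousOn
    have hz₀norm : ‖z₀‖ = 1 := mem_sphere_zero_iff_norm.mp hz₀mem
    have hz₀ne : z₀ ≠ 0 := by
      intro h; rw [h, norm_zero] at hz₀norm; exact one_ne_zero hz₀norm.symm
    refine ⟨M z₀, hposM z₀ hz₀ne, ?_⟩
    intro z
    rcases eq_or_ne z 0 with rfl | hz
    · simpa using hMnonneg 0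
    · set r : ℝ := ‖z‖ with hr
      have hrpos : 0 < r := norm_pos_iff.mpr hz
      set u : ℂ × ℂ := ((r : ℂ)⁻¹ * z.1, (r : ℂ)⁻¹ * z.2) with hu
      have hnorminv : ‖((r : ℂ)⁻¹)‖ = r⁻¹ := by
        rw [norm_inv, Complex.norm_real, Real.norm_eq_abs, abs_of_pos hrpos]
      have humem : u ∈ Metric.sphere (0 : ℂ × ℂ) 1 := by
        rw [mem_sphere_zero_iff_norm]
        have : ‖u‖ = max ‖(r : ℂ)⁻¹ * z.1‖ ‖(r : ℂ)⁻¹ * z.2‖ := rfl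
        rw [this, norm_mul, norm_mul, hnorminv, ← mul_max_of_nonneg _ _ (inv_nonneg.mpr hrpos.le)]
        have : max ‖z.1‖ ‖z.2‖ = r := rfl
        rw [this, inv_mul_cancel₀ hrpos.ne']
      have hMu : M z₀ ≤ M u := hz₀min humem
      have hzu : M z = r ^ 2 * M u := by
        have h1 : ((r : ℂ) * u.1, (r : ℂ) * u.2) = z := by
          simp only [hu]
          rw [← mul_assoc, ← mul_assoc, mul_inv_cancel₀ (by exact_mod_cast hrpos.ne'), one_mul,
            one_mul]
        have := hMhom (r : ℂ) u
        rw [h1] at this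
        rw [this, Complex.normSq_ofReal]
        ring_nf
      rw [hzu]
      have := mul_le_mul_of_nonneg_left hMu (sq_nonneg r)
      calc M z₀ * ‖z‖ ^ 2 = r ^ 2 * M z₀ := by rw [← hr]; ring
        _ ≤ r ^ 2 * M u := mul_le_mul_of_nonneg_left hMu (sq_nonneg r)

  -- the integrand
  set g : ℂ → ℝ := fun y => ((M (y, 1)) ^ 2)⁻¹ with hg
  have hgcont : Continuous g := by
    refine ((hMcont.comp (continuous_id.prodMk continuous_const)).pow 2).inv₀ ?_
    intro y
    exact pow_ne_zero _ (hM1pos y).ne'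
  have hgnonneg : ∀ y, 0 ≤ g y := fun y => inv_nonneg.mpr (sq_nonneg _)
  have hInt : Integrable g := by
    have hmaj : Integrable (fun y : ℂ => (16 * δ⁻¹ ^ 2) * (1 + ‖y‖) ^ (-(4 : ℝ))) := by
      refine Integrable.const_mul ?_ _
      refine integrable_one_add_norm (μ := volume) (E := ℂ) ?_
      rw [Complex.finrank_real_complex]; norm_num
    refine hmaj.mono' hgcont.aestronglyMeasurable (Filter.Eventually.of_forall fun y => ?_)
    have hs : (0:ℝ) < 1 + ‖y‖ := by positivity
    have h1 : (1 + ‖y‖) / 2 ≤ ‖((y, 1) : ℂ × ℂ)‖ := by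
      have : ‖((y, 1) : ℂ × ℂ)‖ = max ‖y‖ ‖(1:ℂ)‖ := rfl
      rw [this, norm_one]
      rcases le_total ‖y‖ 1 with h | h
      · rw [max_eq_right h]; linarith
      · rw [max_eq_left h]; linarith
    have hA : δ * ((1 + ‖y‖) / 2) ^ 2 ≤ M (y, 1) := by
      refine le_trans ?_ (hδ (y, 1))
      exact mul_le_mul_of_nonneg_left (pow_le_pow_left₀ (by positivity) h1 2) hδpos.le
    have hApos : (0:ℝ) < δ * ((1 + ‖y‖) / 2) ^ 2 := by positivity
    have hgle : g y ≤ ((δ * ((1 + ‖y‖) / 2) ^ 2) ^ 2)⁻¹ := by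
      rw [hg]
      exact inv_anti₀ (by positivity) (pow_le_pow_left₀ hApos.le hA 2)
    have hrpow : (1 + ‖y‖) ^ (-(4:ℝ)) = ((1 + ‖y‖) ^ (4:ℕ))⁻¹ := by
      rw [← Real.rpow_natCast (1 + ‖y‖) 4, ← Real.rpow_neg hs.le]
      norm_num
    have hgnn : 0 ≤ g y := by rw [hg]; positivity
    rw [Real.norm_eq_abs, abs_of_nonneg hgnn]
    refine hgle.trans ?_
    rw [hrpow]
    rw [show ((δ * ((1 + ‖y‖) / 2) ^ 2) ^ 2)⁻¹ = 16 * δ⁻¹ ^ 2 * ((1 + ‖y‖) ^ (4:ℕ))⁻¹ by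
      field_simp; ring]

  -- identify the integrand of the statement with g
  have hQ1 : ∀ y : ℂ, (fun i => ‖a i * y ^ 2 + b i * y + c i‖)
      = fun i => ‖Q i (y, 1)‖ := by
    intro y; funext i; simp only [hQ]; ring_nf
  -- the set A
  set A : Set (ℂ × ℂ) := {p | M p ≤ 1} with hA
  have hAmeas : MeasurableSet A := measurableSet_le hMcont.measurable measurable_const
  -- key identity
  have hkey : volume A = ENNReal.ofReal (Real.pi / 2) * ∫⁻ y, ENNReal.ofReal (g y) := by
    set s : Set (ℂ × ℂ) := {p | p.2 ≠ 0} with hs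
    have hsmeas : MeasurableSet s :=
      ((isClosed_eq continuous_snd continuous_const).measurableSet).compl
    have hsae : ∀ᵐ p : ℂ × ℂ, p ∈ s := by
      rw [ae_iff]
      have : {p : ℂ × ℂ | ¬p ∈ s} = (univ : Set ℂ) ×ˢ ({0} : Set ℂ) := by
        ext p
        simp only [hs, Set.mem_setOf_eq, not_not, Set.mem_prod, Set.mem_univ,
          Set.mem_singleton_iff, true_and]
      rw [this, Measure.volume_eq_prod, Measure.prod_prod]
      simp
    set φ : ℂ × ℂ → ℂ × ℂ := fun p => (p.1 * p.2, p.2) with hφ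
    have hφs : φ '' s = s := by
      ext p
      constructor
      · rintro ⟨q, hq, rfl⟩; exact hq
      · intro hp
        exact ⟨(p.1 / p.2, p.2), hp, by simp [hφ, div_mul_cancel₀ _ (show p.2 ≠ 0 from hp)]⟩
    have hφinj : Set.InjOn φ s := by
      intro p hp q hq h
      obtain ⟨h1, h2⟩ := Prod.ext_iff.mp h
      simp only [hφ] at h1 h2
      refine Prod.ext ?_ h2
      rw [h2] at h1
      exact mul_right_cancel₀ (show q.2 ≠ 0 from hq) h1
    set f' : ℂ × ℂ → (ℂ × ℂ →L[ℝ] ℂ × ℂ) := fun p =>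
      (p.1 • ContinuousLinearMap.snd ℝ ℂ ℂ + p.2 • ContinuousLinearMap.fst ℝ ℂ ℂ).prod
        (ContinuousLinearMap.snd ℝ ℂ ℂ) with hf'
    have hderiv : ∀ p ∈ s, HasFDerivWithinAt φ (f' p) s p := by
      intro p _
      exact (HasFDerivAt.prodMk (HasFDerivAt.mul (hasFDerivAt_fst (𝕜 := ℝ) (p := p))
        (hasFDerivAt_snd (𝕜 := ℝ) (p := p))) (hasFDerivAt_snd (𝕜 := ℝ) (p := p))).hasFDerivWithinAt
    haveI hHaar : (volume : Measure (ℂ × ℂ)).IsAddHaarMeasure := by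
      rw [Measure.volume_eq_prod]; infer_instance
    have hdet : ∀ p : ℂ × ℂ, (f' p).det = Complex.normSq p.2 := fun p => det_phi_deriv p.1 p.2
    -- change of variables
    have step1 : volume A = ∫⁻ p in s, ENNReal.ofReal (Complex.normSq p.2)
        * A.indicator 1 (φ p) := by
      calc volume A = ∫⁻ p, A.indicator 1 p := (lintegral_indicator_one hAmeas).symm
        _ = ∫⁻ p in s, A.indicator 1 p := by
            rw [Measure.restrict_eq_self_of_ae_mem hsae]
        _ = ∫⁻ p in φ '' s, A.indicator 1 p := by rw [hφs]
        _ = ∫⁻ p in s, ENNReal.ofReal |(f' p).det| * A.indicator 1 (φ p) :=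
            lintegral_image_eq_lintegral_abs_det_fderiv_mul volume hsmeas hderiv hφinj _
        _ = ∫⁻ p in s, ENNReal.ofReal (Complex.normSq p.2) * A.indicator 1 (φ p) := by
            congr 1; funext p
            rw [hdet p, abs_of_nonneg (Complex.normSq_nonneg _)]
    rw [step1, Measure.restrict_eq_self_of_ae_mem hsae]
    -- Fubini
    have hFmeas : Measurable fun p : ℂ × ℂ =>
        ENNReal.ofReal (Complex.normSq p.2) * A.indicator 1 (φ p) := by
      refine Measurable.mul ?_ ?_
      · exact ENNReal.measurable_ofReal.comp
          (Complex.continuous_normSq.measurable.comp measurable_snd)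
      · exact (measurable_one.indicator hAmeas).comp (by fun_prop)
    rw [Measure.volume_eq_prod, lintegral_prod _ hFmeas.aemeasurable]
    -- inner integral
    have inner : ∀ y : ℂ, ∫⁻ w, ENNReal.ofReal (Complex.normSq w) * A.indicator 1 (φ (y, w))
        = ENNReal.ofReal (Real.pi / 2) * ENNReal.ofReal (((M (y, 1)) ^ 2)⁻¹) := by
      intro y
      have hT : 0 < M (y, 1) := hM1pos y
      set T : ℝ := (M (y, 1))⁻¹ with hTdef
      have hTpos : 0 < T := inv_pos.mpr hT
      have hMyw : ∀ w : ℂ, M (y * w, w) = Complex.normSq w * M (y, 1) := by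
        intro w
        have := hMhom w (y, 1)
        simpa [mul_comm] using this
      have hind : ∀ w : ℂ, A.indicator (1 : ℂ × ℂ → ℝ≥0∞) (φ (y, w))
          = (Metric.closedBall (0 : ℂ) (Real.sqrt T)).indicator (1 : ℂ → ℝ≥0∞) w := by
        intro w
        have hmem : φ (y, w) ∈ A ↔ w ∈ Metric.closedBall (0 : ℂ) (Real.sqrt T) := by
          rw [hA, hφ]
          simp only [Set.mem_setOf_eq, Metric.mem_closedBall, dist_zero_right]
          rw [hMyw w]
          have h1 : Complex.normSq w * M (y, 1) ≤ 1 ↔ Complex.normSq w ≤ T := by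
            rw [hTdef, inv_eq_one_div, le_div_iff₀ hT]
          have h2 : Complex.normSq w ≤ T ↔ ‖w‖ ≤ Real.sqrt T := by
            rw [show Complex.normSq w = ‖w‖ ^ 2 by
              rw [Complex.normSq_eq_norm_sq]]
            constructor
            · intro h
              rw [← Real.sqrt_sq (norm_nonneg w)]
              exact Real.sqrt_le_sqrt h
            · intro h
              calc ‖w‖ ^ 2 ≤ Real.sqrt T ^ 2 := by
                    exact pow_le_pow_left₀ (norm_nonneg w) h 2
                _ = T := Real.sq_sqrt hTpos.le
          exact h1.trans h2
        by_cases h : φ (y, w) ∈ A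
        · rw [Set.indicator_of_mem h, Set.indicator_of_mem (hmem.mp h)]
          rfl
        · rw [Set.indicator_of_notMem h, Set.indicator_of_notMem (fun hh => h (hmem.mpr hh))]
      calc ∫⁻ w, ENNReal.ofReal (Complex.normSq w) * A.indicator 1 (φ (y, w))
          = ∫⁻ w, (Metric.closedBall (0 : ℂ) (Real.sqrt T)).indicator
              (fun w => ENNReal.ofReal (Complex.normSq w)) w := by
            congr 1; funext w
            rw [hind w]
            by_cases h : w ∈ Metric.closedBall (0 : ℂ) (Real.sqrt T)
            · rw [Set.indicator_of_mem h, Set.indicator_of_mem h, Pi.one_apply, mul_one]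
            · rw [Set.indicator_of_notMem h, Set.indicator_of_notMem h, mul_zero]
        _ = ∫⁻ w in Metric.closedBall (0 : ℂ) (Real.sqrt T),
              ENNReal.ofReal (Complex.normSq w) := by
            rw [lintegral_indicator measurableSet_closedBall]
        _ = ENNReal.ofReal (Real.pi / 2 * (Real.sqrt T) ^ 4) :=
            lintegral_normSq_closedBall _ (Real.sqrt_nonneg _)
        _ = ENNReal.ofReal (Real.pi / 2) * ENNReal.ofReal (((M (y, 1)) ^ 2)⁻¹) := by
            rw [← ENNReal.ofReal_mul (by positivity)]
            congr 1
            rw [show (Real.sqrt T) ^ 4 = ((Real.sqrt T) ^ 2) ^ 2 by ring,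
              Real.sq_sqrt hTpos.le, hTdef, ← inv_pow]
    simp_rw [inner]
    rw [lintegral_const_mul' _ _ ENNReal.ofReal_ne_top]

  -- conclusion
  have hLfin : ∫⁻ y, ENNReal.ofReal (g y) < ⊤ := hInt.lintegral_lt_top
  have hLHS : ∫ y : ℂ, ((⨆ i, ‖a i * y ^ 2 + b i * y + c i‖) ^ 2)⁻¹
      = (∫⁻ y, ENNReal.ofReal (g y)).toReal := by
    have : (fun y : ℂ => ((⨆ i, ‖a i * y ^ 2 + b i * y + c i‖) ^ 2)⁻¹) = g := by
      funext y; rw [hg, hMdef]; simp only [hQ1 y]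
    rw [this]
    rw [integral_eq_lintegral_of_nonneg_ae (Filter.Eventually.of_forall hgnonneg)
      hgcont.aestronglyMeasurable]
  rw [hLHS, hkey]
  rw [ENNReal.toReal_mul, ENNReal.toReal_ofReal (by positivity)]
  rw [← mul_assoc]
  have hπ : Real.pi ≠ 0 := Real.pi_ne_zero
  field_simp
end
end

section
/- Let $a_1, a_2, a_3, a_4$ be pairwise coprime positive integers. Then $\Bigg(\sum_{\substack{d_3, d_4 \ge 1 \\ \gcd(d_3, d_4) = 1 \\ \gcd(d_3,\, a_1 a_2 a_4) = 1 \\ \gcd(d_4,\, a_1 a_2 a_3) = 1}} \frac{\mu(d_3)\mu(d_4)}{d_3^2 d_4^2}\Bigg) \Bigg(\sum_{e_1 \mid a_1} \frac{\mu(e_1)}{e_1}\Bigg) \Bigg(\sum_{e_2 \mid a_2} \frac{\mu(e_2)}{e_2}\Bigg) = \prod_{p \nmid a_1 a_2 a_3 a_4} \Big(1 - \frac{2}{p^2}\Big) \prod_{p \mid a_1 a_2} \Big(1 - \frac{1}{p}\Big) \prod_{p \mid a_3 a_4} \Big(1 - \frac{1}{p^2}\Big)$, where $\mu$ is the Möbius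 function, the double sum over $(d_3, d_4)$ converges absolutely, the products run over prime numbers, and the first (infinite) product converges. -/
open ArithmeticFunction

namespace ThetaEP
set_option maxHeartbeats 1000000

noncomputable def G (m k : ℕ) : ℕ × ℕ → ℝ := fun d =>
  if 1 ≤ d.1 ∧ 1 ≤ d.2 ∧ Nat.Coprime d.1 d.2 ∧ Nat.Coprime d.1 m ∧ Nat.Coprime d.2 k then
    ((moebius d.1 : ℝ) * (moebius d.2 : ℝ)) / ((d.1 : ℝ) ^ 2 * (d.2 : ℝ) ^ 2)
  else 0

lemma moebius_real_abs (n : ℕ) : |(moebius n : ℝ)| ≤ 1 := by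
  have h := ArithmeticFunction.abs_moebius_le_one (n := n)
  rw [← Int.cast_abs]
  exact_mod_cast h

lemma summable_norm_G (m k : ℕ) : Summable (fun d => ‖G m k d‖) := by
  have hg : Summable (fun n : ℕ => 1 / (n : ℝ) ^ 2) :=
    Real.summable_one_div_nat_pow.mpr one_lt_two
  have hprod : Summable (fun d : ℕ × ℕ => (1 / (d.1 : ℝ) ^ 2) * (1 / (d.2 : ℝ) ^ 2)) :=
    hg.mul_of_nonneg hg (fun n => by positivity) (fun n => by positivity)
  refine Summable.of_nonneg_of_le (fun d => norm_nonneg _) (fun d => ?_) hprod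
  rw [Real.norm_eq_abs, G]
  split_ifs with h
  · have h1 : (0:ℝ) < (d.1 : ℝ) ^ 2 := by
      have : (0:ℝ) < (d.1 : ℝ) := by exact_mod_cast h.1
      positivity
    have h2 : (0:ℝ) < (d.2 : ℝ) ^ 2 := by
      have : (0:ℝ) < (d.2 : ℝ) := by exact_mod_cast h.2.1
      positivity
    rw [abs_div, abs_mul, abs_of_pos (mul_pos h1 h2), div_mul_div_comm, one_mul]
    have hle : |(moebius d.1 : ℝ)| * |(moebius d.2 : ℝ)| ≤ 1 :=
      mul_le_one₀ (moebius_real_abs _) (abs_nonneg _) (moebius_real_abs _)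
    exact div_le_div_of_nonneg_right hle (mul_pos h1 h2).le
  · simp only [abs_zero]
    positivity


noncomputable def F (m k : ℕ) : ℕ → ℝ := fun n =>
  ∑' b : (fun p : ℕ × ℕ => p.1 * p.2) ⁻¹' {n}, G m k b.val

lemma hasSum_F (m k : ℕ) : HasSum (F m k) (∑' d, G m k d) :=
  ((summable_norm_G m k).of_norm.hasSum).tsum_fiberwise _

lemma summable_norm_F (m k : ℕ) : Summable (fun n => ‖F m k n‖) := by
  have h := ((summable_norm_G m k).hasSum.tsum_fiberwise (fun p => p.1 * p.2)).summable
  refine Summable.of_nonneg_of_le (fun n => norm_nonneg _) (fun n => ?_) h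
  exact norm_tsum_le_tsum_norm ((summable_norm_G m k).subtype _)

lemma F_apply (m k : ℕ) {n : ℕ} (hn : n ≠ 0) :
    F m k n = ∑ p ∈ n.divisorsAntidiagonal, G m k p := by
  rw [F, show (fun p : ℕ × ℕ => p.1 * p.2) ⁻¹' {n} = ↑n.divisorsAntidiagonal by
    ext p; simp [Nat.mem_divisorsAntidiagonal, hn]]
  exact Finset.tsum_subtype' n.divisorsAntidiagonal (G m k)

lemma F_zero (m k : ℕ) : F m k 0 = 0 := by
  rw [F]
  convert tsum_zero with b
  obtain ⟨⟨x, y⟩, hb⟩ := b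
  simp only [Set.mem_preimage, Set.mem_singleton_iff, Nat.mul_eq_zero] at hb
  rcases hb with rfl | rfl <;> simp [G]

noncomputable def ind (m : ℕ) : ArithmeticFunction ℝ :=
  ⟨fun d => if d ≠ 0 ∧ Nat.Coprime d m then 1 else 0, by simp⟩

lemma ind_mult (m : ℕ) : (ind m).IsMultiplicative := by
  constructor
  · simp [ind, Nat.coprime_one_left]
  · intro a b hab
    rcases eq_or_ne a 0 with rfl | ha
    · rw [Nat.coprime_zero_left] at hab
      subst hab
      simp [ind]
    rcases eq_or_ne b 0 with rfl | hb
    · rw [Nat.coprime_zero_right] at hab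
      subst hab
      simp [ind]
    simp only [ind, ArithmeticFunction.coe_mk, ne_eq, mul_eq_zero, ha, hb, or_self,
      not_false_eq_true, true_and, Nat.coprime_mul_iff_left]
    split_ifs <;> simp_all

lemma F_eq (m k : ℕ) {n : ℕ} (hn : n ≠ 0) :
    F m k n = (moebius n : ℝ) / (n : ℝ) ^ 2 * ((ind m * ind k) n) := by
  rw [F_apply m k hn, ArithmeticFunction.mul_apply, Finset.mul_sum]
  refine Finset.sum_congr rfl fun p hp => ?_
  obtain ⟨h1, h2⟩ := Nat.ne_zero_of_mem_divisorsAntidiagonal hp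
  have hpn := (Nat.mem_divisorsAntidiagonal.mp hp).1
  subst hpn
  by_cases hc : Nat.Coprime p.1 p.2
  · have hmu : moebius (p.1 * p.2) = moebius p.1 * moebius p.2 :=
      isMultiplicative_moebius.map_mul_of_coprime hc
    simp only [G, ind, ArithmeticFunction.coe_mk]
    by_cases hm3 : Nat.Coprime p.1 m <;> by_cases hm4 : Nat.Coprime p.2 k
    · rw [if_pos ⟨Nat.one_le_iff_ne_zero.mpr h1, Nat.one_le_iff_ne_zero.mpr h2, hc, hm3, hm4⟩,
        if_pos ⟨h1, hm3⟩, if_pos ⟨h2, hm4⟩, hmu]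
      push_cast
      ring
    · rw [if_neg (by tauto : ¬(1 ≤ p.1 ∧ 1 ≤ p.2 ∧ p.1.Coprime p.2 ∧ p.1.Coprime m ∧ p.2.Coprime k)),
        if_neg (by tauto : ¬(p.2 ≠ 0 ∧ p.2.Coprime k))]
      ring
    · rw [if_neg (by tauto : ¬(1 ≤ p.1 ∧ 1 ≤ p.2 ∧ p.1.Coprime p.2 ∧ p.1.Coprime m ∧ p.2.Coprime k)),
        if_neg (by tauto : ¬(p.1 ≠ 0 ∧ p.1.Coprime m))]
      ring
    · rw [if_neg (by tauto : ¬(1 ≤ p.1 ∧ 1 ≤ p.2 ∧ p.1.Coprime p.2 ∧ p.1.Coprime m ∧ p.2.Coprime k)),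
        if_neg (by tauto : ¬(p.1 ≠ 0 ∧ p.1.Coprime m))]
      ring
  · rw [G, if_neg (by tauto)]
    have hsq : ¬ Squarefree (p.1 * p.2) := by
      rw [Nat.squarefree_mul_iff]
      tauto
    rw [moebius_eq_zero_of_not_squarefree hsq]
    simp

lemma F_one (m k : ℕ) : F m k 1 = 1 := by
  rw [F_eq m k one_ne_zero, ((ind_mult m).mul (ind_mult k)).map_one]
  simp

lemma F_mul (m k : ℕ) {a b : ℕ} (hab : Nat.Coprime a b) :
    F m k (a * b) = F m k a * F m k b := by
  rcases eq_or_ne a 0 with rfl | ha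
  · rw [Nat.coprime_zero_left] at hab
    subst hab
    simp [F_zero, F_one]
  rcases eq_or_ne b 0 with rfl | hb
  · rw [Nat.coprime_zero_right] at hab
    subst hab
    simp [F_zero, F_one]
  rw [F_eq m k (mul_ne_zero ha hb), F_eq m k ha, F_eq m k hb,
    isMultiplicative_moebius.map_mul_of_coprime hab,
    ((ind_mult m).mul (ind_mult k)).map_mul_of_coprime hab]
  push_cast
  ring


lemma c_prime (m k : ℕ) {p : ℕ} (hp : p.Prime) :
    (ind m * ind k) p =
      (if Nat.Coprime p k then 1 else 0) + (if Nat.Coprime p m then 1 else 0) := by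
  rw [ArithmeticFunction.mul_apply,
    Nat.sum_divisorsAntidiagonal (fun x y => ind m x * ind k y), hp.divisors,
    Finset.sum_pair hp.one_lt.ne]
  have hp0 : p ≠ 0 := hp.pos.ne'
  simp [ind, hp0, Nat.div_self hp.pos, Nat.coprime_one_left]

lemma local_factor (m k : ℕ) {p : ℕ} (hp : p.Prime) :
    ∑' e : ℕ, F m k (p ^ e) = 1 - ((ind m * ind k) p) / (p : ℝ) ^ 2 := by
  have h0 : ∀ e ∉ ({0, 1} : Finset ℕ), F m k (p ^ e) = 0 := by
    intro e he
    simp only [Finset.mem_insert, Finset.mem_singleton] at he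
    push_neg at he
    rw [F_eq m k (pow_ne_zero _ hp.pos.ne'), moebius_apply_prime_pow hp he.1, if_neg he.2]
    simp
  rw [tsum_eq_sum h0, Finset.sum_pair (by norm_num : (0:ℕ) ≠ 1)]
  rw [pow_zero, pow_one, F_one, F_eq m k hp.pos.ne', moebius_apply_prime hp]
  push_cast
  ring

lemma squarefree_prod_primes {t : Finset ℕ} (ht : ∀ p ∈ t, p.Prime) :
    Squarefree (∏ p ∈ t, p) := by
  classical
  induction t using Finset.induction with
  | empty => simp [squarefree_one]
  | @insert a s hx ih =>
    rw [Finset.prod_insert hx, Nat.squarefree_mul_iff]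
    have ha : a.Prime := ht a (Finset.mem_insert_self a s)
    have hps : ∀ p ∈ s, p.Prime := fun p hp => ht p (Finset.mem_insert_of_mem hp)
    refine ⟨?_, ha.squarefree, ih hps⟩
    refine Nat.Coprime.prod_right fun p hp => ?_
    exact (Nat.coprime_primes ha (hps p hp)).mpr (fun h => hx (h ▸ hp))

noncomputable def finv : ArithmeticFunction ℝ := ⟨fun d => ((d : ℝ))⁻¹, by simp⟩

lemma finv_mult : finv.IsMultiplicative := by
  constructor
  · simp [finv]
  · intro a b _
    simp only [finv, ArithmeticFunction.coe_mk]
    push_cast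
    exact mul_inv _ _

lemma sum_moebius_div (a : ℕ) (ha : a ≠ 0) :
    ∑ e ∈ a.divisors, (moebius e : ℝ) / (e : ℝ) =
      ∏ p ∈ a.primeFactors, (1 - 1 / (p : ℝ)) := by
  classical
  have hprimes : ∀ p ∈ a.primeFactors, p.Prime := fun p hp => Nat.prime_of_mem_primeFactors hp
  have hrad : Squarefree (∏ p ∈ a.primeFactors, p) := squarefree_prod_primes hprimes
  have key := ArithmeticFunction.IsMultiplicative.prodPrimeFactors_one_sub_of_squarefree
    finv finv_mult hrad
  rw [Nat.primeFactors_prod hprimes] at key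
  have hsub : (∏ p ∈ a.primeFactors, p).divisors ⊆ a.divisors :=
    Nat.divisors_subset_of_dvd ha (Nat.prod_primeFactors_dvd a)
  have hext : ∑ d ∈ (∏ p ∈ a.primeFactors, p).divisors, (moebius d : ℝ) * finv d =
      ∑ d ∈ a.divisors, (moebius d : ℝ) * finv d := by
    refine Finset.sum_subset hsub fun d hd hnd => ?_
    have hdsq : ¬ Squarefree d := by
      intro hsq
      refine hnd ?_
      rw [Nat.mem_divisors]
      refine ⟨?_, hrad.ne_zero⟩
      calc d = ∏ p ∈ d.primeFactors, p := (Nat.prod_primeFactors_of_squarefree hsq).symm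
        _ ∣ ∏ p ∈ a.primeFactors, p :=
          Finset.prod_dvd_prod_of_subset _ _ _
            (Nat.primeFactors_mono (Nat.mem_divisors.mp hd).1 ha)
    rw [moebius_eq_zero_of_not_squarefree hdsq]
    simp
  calc ∑ e ∈ a.divisors, (moebius e : ℝ) / (e : ℝ)
      = ∑ d ∈ a.divisors, (moebius d : ℝ) * finv d := by
        refine Finset.sum_congr rfl fun d _ => ?_
        rw [div_eq_mul_inv]
        rfl
    _ = ∑ d ∈ (∏ p ∈ a.primeFactors, p).divisors, (moebius d : ℝ) * finv d := hext.symm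
    _ = ∏ p ∈ a.primeFactors, (1 - finv p) := by rw [key]
    _ = ∏ p ∈ a.primeFactors, (1 - 1 / (p : ℝ)) := by
        refine Finset.prod_congr rfl fun p _ => ?_
        rw [one_div]
        rfl

lemma hasProd_primes_indicator (t : Finset ℕ) (ht : ∀ q ∈ t, q.Prime) (g : ℕ → ℝ) :
    HasProd (fun p : Nat.Primes => if (p : ℕ) ∈ t then g p else 1) (∏ q ∈ t, g q) := by
  classical
  let s : Finset Nat.Primes :=
    t.attach.map ⟨fun x => (⟨x.1, ht x.1 x.2⟩ : Nat.Primes),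
      fun x y h => Subtype.ext (Subtype.mk_eq_mk.mp h)⟩
  have hs : ∀ p : Nat.Primes, p ∈ s ↔ (p : ℕ) ∈ t := by
    intro p
    simp only [s, Finset.mem_map, Finset.mem_attach, true_and, Function.Embedding.coeFn_mk]
    constructor
    · rintro ⟨x, rfl⟩
      exact x.2
    · intro hpt
      exact ⟨⟨(p : ℕ), hpt⟩, Subtype.ext rfl⟩
  have h1 : ∀ p ∉ s, (if (p : ℕ) ∈ t then g p else 1) = 1 := fun p hp =>
    if_neg fun h => hp ((hs p).mpr h)
  have hprod : HasProd (fun p : Nat.Primes => if (p : ℕ) ∈ t then g p else 1)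
      (∏ p ∈ s, (if (p : ℕ) ∈ t then g (p : ℕ) else 1)) := hasProd_prod_of_ne_finset_one h1
  have heq : ∏ p ∈ s, (if (p : ℕ) ∈ t then g (p : ℕ) else 1) = ∏ q ∈ t, g q := by
    rw [Finset.prod_map]
    show ∏ x ∈ t.attach, (if (x : ℕ) ∈ t then g (x : ℕ) else 1) = ∏ q ∈ t, g q
    rw [Finset.prod_congr rfl fun x _ => if_pos x.2]
    exact Finset.prod_attach t g
  rwa [heq] at hprod


lemma local_eval (a1 a2 a3 a4 : ℕ)
    (c13 : Nat.Coprime a1 a3) (c14 : Nat.Coprime a1 a4)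
    (c23 : Nat.Coprime a2 a3) (c24 : Nat.Coprime a2 a4) (c34 : Nat.Coprime a3 a4)
    {p : ℕ} (hp : p.Prime) :
    1 - ((ind (a1 * a2 * a4) * ind (a1 * a2 * a3)) p) / (p : ℝ) ^ 2 =
      (if p ∣ a1 * a2 * a3 * a4 then (1 : ℝ) else 1 - 2 / (p : ℝ) ^ 2) *
      (if p ∣ a3 * a4 then 1 - 1 / (p : ℝ) ^ 2 else 1) := by
  rw [c_prime _ _ hp]
  have hnd : ∀ {x y : ℕ}, Nat.Coprime x y → p ∣ x → p ∣ y → False := by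
    intro x y hxy hx hy
    have h1 := Nat.dvd_gcd hx hy
    rw [Nat.Coprime] at hxy
    rw [hxy] at h1
    exact hp.one_lt.ne' (Nat.dvd_one.mp h1)
  have hcop : ∀ x : ℕ, Nat.Coprime p x ↔ ¬ p ∣ x := fun x => hp.coprime_iff_not_dvd
  by_cases h3 : p ∣ a3
  · have h1 : ¬ p ∣ a1 := fun h => hnd c13 h h3
    have h2 : ¬ p ∣ a2 := fun h => hnd c23 h h3
    have h4 : ¬ p ∣ a4 := fun h => hnd c34 h3 h
    have hk : p ∣ a1 * a2 * a3 := dvd_mul_of_dvd_right h3 _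
    have hm : ¬ p ∣ a1 * a2 * a4 := by
      intro h
      rcases hp.dvd_mul.mp h with h' | h'
      · rcases hp.dvd_mul.mp h' with h'' | h'' <;> [exact h1 h''; exact h2 h'']
      · exact h4 h'
    have hA : p ∣ a1 * a2 * a3 * a4 := dvd_mul_of_dvd_left hk a4
    have h34 : p ∣ a3 * a4 := dvd_mul_of_dvd_left h3 a4
    rw [if_neg (fun hc => (hcop _).mp hc hk), if_pos ((hcop _).mpr hm), if_pos hA, if_pos h34]
    ring
  · by_cases h4 : p ∣ a4
    · have h1 : ¬ p ∣ a1 := fun h => hnd c14 h h4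
      have h2 : ¬ p ∣ a2 := fun h => hnd c24 h h4
      have hm : p ∣ a1 * a2 * a4 := dvd_mul_of_dvd_right h4 _
      have hk : ¬ p ∣ a1 * a2 * a3 := by
        intro h
        rcases hp.dvd_mul.mp h with h' | h'
        · rcases hp.dvd_mul.mp h' with h'' | h'' <;> [exact h1 h''; exact h2 h'']
        · exact h3 h'
      have hA : p ∣ a1 * a2 * a3 * a4 := dvd_mul_of_dvd_right h4 _
      have h34 : p ∣ a3 * a4 := dvd_mul_of_dvd_right h4 a3
      rw [if_pos ((hcop _).mpr hk), if_neg (fun hc => (hcop _).mp hc hm), if_pos hA, if_pos h34]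
      ring
    · by_cases h12 : p ∣ a1 * a2
      · have hm : p ∣ a1 * a2 * a4 := dvd_mul_of_dvd_left h12 a4
        have hk : p ∣ a1 * a2 * a3 := dvd_mul_of_dvd_left h12 a3
        have hA : p ∣ a1 * a2 * a3 * a4 := dvd_mul_of_dvd_left (dvd_mul_of_dvd_left h12 a3) a4
        have h34 : ¬ p ∣ a3 * a4 := by
          intro h
          rcases hp.dvd_mul.mp h with h' | h' <;> [exact h3 h'; exact h4 h']
        rw [if_neg (fun hc => (hcop _).mp hc hk), if_neg (fun hc => (hcop _).mp hc hm),
          if_pos hA, if_neg h34]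
        ring
      · have hm : ¬ p ∣ a1 * a2 * a4 := by
          intro h
          rcases hp.dvd_mul.mp h with h' | h' <;> [exact h12 h'; exact h4 h']
        have hk : ¬ p ∣ a1 * a2 * a3 := by
          intro h
          rcases hp.dvd_mul.mp h with h' | h' <;> [exact h12 h'; exact h3 h']
        have hA : ¬ p ∣ a1 * a2 * a3 * a4 := by
          intro h
          rcases hp.dvd_mul.mp h with h' | h'
          · rcases hp.dvd_mul.mp h' with h'' | h'' <;> [exact h12 h''; exact h3 h'']
          · exact h4 h'
        have h34 : ¬ p ∣ a3 * a4 := by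
          intro h
          rcases hp.dvd_mul.mp h with h' | h' <;> [exact h3 h'; exact h4 h']
        rw [if_pos ((hcop _).mpr hk), if_pos ((hcop _).mpr hm), if_neg hA, if_neg h34]
        ring

lemma one_sub_inv_sq_ne {q : ℕ} (hq : q.Prime) : (1 : ℝ) - 1 / (q : ℝ) ^ 2 ≠ 0 := by
  have h2 : (2 : ℝ) ≤ (q : ℝ) := by exact_mod_cast hq.two_le
  have hlt : (1 : ℝ) < (q : ℝ) ^ 2 := by nlinarith
  have : 1 / (q : ℝ) ^ 2 < 1 := (div_lt_one (by positivity)).mpr hlt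
  exact ne_of_gt (by linarith)

end ThetaEP

open ThetaEP in
/-- Euler product evaluation of `θ(𝔞')` for `K = ℚ`: the truncated Möbius sums over
`d₃, d₄, e₁, e₂` factor as the stated Euler product. -/
theorem theta_euler_product
    (a1 a2 a3 a4 : ℕ) (h1 : 0 < a1) (h2 : 0 < a2) (h3 : 0 < a3) (h4 : 0 < a4)
    (c12 : Nat.Coprime a1 a2) (c13 : Nat.Coprime a1 a3) (c14 : Nat.Coprime a1 a4)
    (c23 : Nat.Coprime a2 a3) (c24 : Nat.Coprime a2 a4) (c34 : Nat.Coprime a3 a4) :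
    Summable (fun d : ℕ × ℕ =>
      if 1 ≤ d.1 ∧ 1 ≤ d.2 ∧ Nat.Coprime d.1 d.2 ∧
          Nat.Coprime d.1 (a1 * a2 * a4) ∧ Nat.Coprime d.2 (a1 * a2 * a3) then
        ((moebius d.1 : ℝ) * (moebius d.2 : ℝ)) / ((d.1 : ℝ) ^ 2 * (d.2 : ℝ) ^ 2)
      else 0) ∧
    Multipliable (fun p : Nat.Primes =>
      if (p : ℕ) ∣ a1 * a2 * a3 * a4 then (1 : ℝ) else 1 - 2 / (p : ℕ) ^ 2) ∧
    (∑' d : ℕ × ℕ,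
      if 1 ≤ d.1 ∧ 1 ≤ d.2 ∧ Nat.Coprime d.1 d.2 ∧
          Nat.Coprime d.1 (a1 * a2 * a4) ∧ Nat.Coprime d.2 (a1 * a2 * a3) then
        ((moebius d.1 : ℝ) * (moebius d.2 : ℝ)) / ((d.1 : ℝ) ^ 2 * (d.2 : ℝ) ^ 2)
      else 0) *
    (∑ e1 ∈ a1.divisors, (moebius e1 : ℝ) / (e1 : ℝ)) *
    (∑ e2 ∈ a2.divisors, (moebius e2 : ℝ) / (e2 : ℝ)) =
    (∏' p : Nat.Primes,
      if (p : ℕ) ∣ a1 * a2 * a3 * a4 then (1 : ℝ) else 1 - 2 / (p : ℕ) ^ 2) *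
    (∏ p ∈ (a1 * a2).primeFactors, (1 - 1 / (p : ℝ))) *
    (∏ p ∈ (a3 * a4).primeFactors, (1 - 1 / (p : ℝ) ^ 2)) := by
  have h340 : a3 * a4 ≠ 0 := by positivity
  have hEP : HasProd (fun p : Nat.Primes => ∑' e : ℕ, F (a1 * a2 * a4) (a1 * a2 * a3) ((p : ℕ) ^ e))
      (∑' n, F (a1 * a2 * a4) (a1 * a2 * a3) n) :=
    EulerProduct.eulerProduct_hasProd (F_one _ _) (fun {x y} h => F_mul _ _ h)
      (summable_norm_F _ _) (F_zero _ _)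
  have hLF : ∀ p : Nat.Primes, ∑' e : ℕ, F (a1 * a2 * a4) (a1 * a2 * a3) ((p : ℕ) ^ e) =
      (if (p : ℕ) ∣ a1 * a2 * a3 * a4 then (1 : ℝ) else 1 - 2 / (p : ℕ) ^ 2) *
      (if (p : ℕ) ∣ a3 * a4 then 1 - 1 / ((p : ℕ) : ℝ) ^ 2 else 1) := fun p => by
    rw [local_factor _ _ p.2]
    exact local_eval a1 a2 a3 a4 c13 c14 c23 c24 c34 p.2
  have hQprime : ∀ q ∈ (a3 * a4).primeFactors, q.Prime :=
    fun q hq => Nat.prime_of_mem_primeFactors hq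
  have hwinv : HasProd
      (fun p : Nat.Primes => if (p : ℕ) ∣ a3 * a4 then ((1 : ℝ) - 1 / ((p : ℕ) : ℝ) ^ 2)⁻¹ else 1)
      (∏ q ∈ (a3 * a4).primeFactors, ((1 : ℝ) - 1 / (q : ℝ) ^ 2)⁻¹) := by
    have heq : (fun p : Nat.Primes =>
        if ((p : ℕ) ∈ (a3 * a4).primeFactors) then ((1 : ℝ) - 1 / ((p : ℕ) : ℝ) ^ 2)⁻¹ else 1)
        = fun p : Nat.Primes =>
        if (p : ℕ) ∣ a3 * a4 then ((1 : ℝ) - 1 / ((p : ℕ) : ℝ) ^ 2)⁻¹ else 1 := by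
      funext p
      refine if_congr ?_ rfl rfl
      rw [Nat.mem_primeFactors]
      exact ⟨fun h => h.2.1, fun h => ⟨p.2, h, h340⟩⟩
    exact heq ▸ hasProd_primes_indicator _ hQprime (fun q => ((1 : ℝ) - 1 / (q : ℝ) ^ 2)⁻¹)
  have hfe : (fun p : Nat.Primes => (∑' e : ℕ, F (a1 * a2 * a4) (a1 * a2 * a3) ((p : ℕ) ^ e)) *
      (if (p : ℕ) ∣ a3 * a4 then ((1 : ℝ) - 1 / ((p : ℕ) : ℝ) ^ 2)⁻¹ else 1)) =
      fun p : Nat.Primes =>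
        if (p : ℕ) ∣ a1 * a2 * a3 * a4 then (1 : ℝ) else 1 - 2 / (p : ℕ) ^ 2 := by
    funext p
    rw [hLF p]
    by_cases h : (p : ℕ) ∣ a3 * a4
    · rw [if_pos h, if_pos h, mul_assoc, mul_inv_cancel₀ (one_sub_inv_sq_ne p.2), mul_one]
    · rw [if_neg h, if_neg h, mul_one, mul_one]
  have hr : HasProd
      (fun p : Nat.Primes =>
        if (p : ℕ) ∣ a1 * a2 * a3 * a4 then (1 : ℝ) else 1 - 2 / (p : ℕ) ^ 2)
      ((∑' n, F (a1 * a2 * a4) (a1 * a2 * a3) n) *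
        ∏ q ∈ (a3 * a4).primeFactors, ((1 : ℝ) - 1 / (q : ℝ) ^ 2)⁻¹) :=
    hfe ▸ hEP.mul hwinv
  refine ⟨(summable_norm_G _ _).of_norm, hr.multipliable, ?_⟩
  show (∑' d : ℕ × ℕ, G (a1 * a2 * a4) (a1 * a2 * a3) d) *
    (∑ e1 ∈ a1.divisors, (moebius e1 : ℝ) / (e1 : ℝ)) *
    (∑ e2 ∈ a2.divisors, (moebius e2 : ℝ) / (e2 : ℝ)) =
    (∏' p : Nat.Primes,
      if (p : ℕ) ∣ a1 * a2 * a3 * a4 then (1 : ℝ) else 1 - 2 / (p : ℕ) ^ 2) *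
    (∏ p ∈ (a1 * a2).primeFactors, (1 - 1 / (p : ℝ))) *
    (∏ p ∈ (a3 * a4).primeFactors, (1 - 1 / (p : ℝ) ^ 2))
  rw [hr.tprod_eq, ← (hasSum_F (a1 * a2 * a4) (a1 * a2 * a3)).tsum_eq,
    sum_moebius_div a1 h1.ne', sum_moebius_div a2 h2.ne',
    Nat.primeFactors_mul h1.ne' h2.ne', Finset.prod_union c12.disjoint_primeFactors,
    Finset.prod_inv_distrib]
  have hQ : (∏ q ∈ (a3 * a4).primeFactors, ((1 : ℝ) - 1 / (q : ℝ) ^ 2)) ≠ 0 :=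
    Finset.prod_ne_zero_iff.mpr fun q hq => one_sub_inv_sq_ne (hQprime q hq)
  field_simp
end

section
/- The Lebesgue measure of the polytope $P_\alpha = \{(t_1, t_2, t_3, t_4) \in \mathbb{R}^4 : t_k \ge 0 \text{ for all } k, \text{ and } 2t_i + 2t_j - t_3 - t_4 \le 1 \text{ for all pairs of distinct indices } i, j \in \{1,2,3,4\}\}$ equals $\frac{17}{288}$. Equivalently, the constant $\alpha(X) = \frac{1}{2}\operatorname{vol}(P_\alpha)$ (the case $q = 0$) equals $\frac{17}{576}$. -/
open MeasureTheory Set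
open scoped ENNReal

namespace VolPAlpha

/-- conditions on `(t₃, t₂, t₀, t₁) =: (v, u, x, y)` defining the polytope. -/
def Q (v u x y : ℝ) : Prop :=
  0 ≤ v ∧ 0 ≤ u ∧ 0 ≤ x ∧ 0 ≤ y ∧ u + v ≤ 1 ∧
  2*x + 2*y ≤ 1 + u + v ∧ 2*x + u - v ≤ 1 ∧ 2*x - u + v ≤ 1 ∧
  2*y + u - v ≤ 1 ∧ 2*y - u + v ≤ 1

lemma Q_symm {v u x y : ℝ} : Q v u x y ↔ Q u v x y := by
  unfold Q
  constructor <;> rintro ⟨h1,h2,h3,h4,h5,h6,h7,h8,h9,h10⟩ <;>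
    exact ⟨h2,h1,h3,h4,by linarith,by linarith,by linarith,by linarith,by linarith,by linarith⟩

def T : Set (ℝ × ℝ × ℝ × ℝ) := {p | Q p.1 p.2.1 p.2.2.1 p.2.2.2}

lemma measurableSet_T : MeasurableSet T := by
  unfold T Q
  simp only [setOf_and]
  repeat
    apply MeasurableSet.inter
    · exact measurableSet_le (by fun_prop) (by fun_prop)
  exact measurableSet_le (by fun_prop) (by fun_prop)

def sl1 (v u x : ℝ) : Set ℝ := {y | Q v u x y}

lemma slice_y_eq (v u x : ℝ) (h0 : 0 ≤ u) (huv : u ≤ v) (h1 : u + v ≤ 1)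
    (hx0 : 0 ≤ x) (hxm : 2*x ≤ 1 + u - v) :
    sl1 v u x = Icc 0 (min ((1+u-v)/2) ((1+u+v)/2 - x)) := by
  ext y
  simp only [sl1, Q, mem_setOf_eq, mem_Icc, le_min_iff]
  constructor
  · rintro ⟨_,_,_,h4,_,h6,_,_,_,h10⟩
    exact ⟨h4, by linarith, by linarith⟩
  · rintro ⟨hy0, hy1, hy2⟩
    exact ⟨by linarith, h0, hx0, hy0, h1, by linarith, by linarith, by linarith,
      by linarith, by linarith⟩

lemma slice_y_empty (v u x : ℝ) (h : ¬ (0 ≤ x ∧ 2*x ≤ 1 + u - v)) :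
    sl1 v u x = ∅ := by
  ext y
  simp only [sl1, Q, mem_setOf_eq, mem_empty_iff_false, iff_false]
  rintro ⟨_,_,h3,_,_,_,_,h8,_,_⟩
  exact h ⟨h3, by linarith⟩

lemma slice_y_empty' (v u x : ℝ) (h : ¬ (0 ≤ v ∧ 0 ≤ u ∧ u + v ≤ 1)) :
    sl1 v u x = ∅ := by
  ext y
  simp only [sl1, Q, mem_setOf_eq, mem_empty_iff_false, iff_false]
  rintro ⟨h1,h2,_,_,h5,_,_,_,_,_⟩
  exact h ⟨h1, h2, h5⟩


lemma integral_cubic (a b c0 c1 c2 c3 : ℝ) :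
    ∫ x in a..b, (c0 + c1*x + c2*x^2 + c3*x^3) =
      (c0*b + c1/2*b^2 + c2/3*b^3 + c3/4*b^4) - (c0*a + c1/2*a^2 + c2/3*a^3 + c3/4*a^4) := by
  have h : ∀ x ∈ uIcc a b, HasDerivAt (fun t => c0*t + c1/2*t^2 + c2/3*t^3 + c3/4*t^4)
      (c0 + c1*x + c2*x^2 + c3*x^3) x := by
    intro x _
    have h1 := (hasDerivAt_id x).const_mul c0
    have h2 := (hasDerivAt_pow 2 x).const_mul (c1/2)
    have h3 := (hasDerivAt_pow 3 x).const_mul (c2/3)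
    have h4 := (hasDerivAt_pow 4 x).const_mul (c3/4)
    convert ((h1.add h2).add h3).add h4 using 1 <;> try rfl
    push_cast
    ring
  rw [intervalIntegral.integral_eq_sub_of_hasDerivAt h
    ((Continuous.intervalIntegrable (by fun_prop) a b))]

lemma lint_Ioc (a b : ℝ) (f : ℝ → ℝ) (hab : a ≤ b) (hf : Continuous f)
    (hnn : ∀ x ∈ Ioc a b, 0 ≤ f x) :
    ∫⁻ x in Ioc a b, ENNReal.ofReal (f x) = ENNReal.ofReal (∫ x in a..b, f x) := by
  rw [intervalIntegral.integral_of_le hab, ← ofReal_integral_eq_lintegral_ofReal]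
  · exact hf.integrableOn_Ioc
  · exact (ae_restrict_iff' measurableSet_Ioc).2 (ae_of_all _ hnn)

lemma lintegral_support (F : ℝ → ℝ≥0∞) (s : Set ℝ) (hs : MeasurableSet s)
    (h : ∀ x, x ∉ s → F x = 0) : ∫⁻ x, F x = ∫⁻ x in s, F x := by
  rw [← lintegral_indicator hs]
  congr 1
  funext x
  by_cases hx : x ∈ s
  · simp [hx]
  · simp [hx, h x hx]

lemma lint_split (a b c : ℝ) (hab : a ≤ b) (hbc : b ≤ c) (F : ℝ → ℝ≥0∞) :
    ∫⁻ x in Ioc a c, F x = (∫⁻ x in Ioc a b, F x) + ∫⁻ x in Ioc b c, F x := by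
  rw [← Ioc_union_Ioc_eq_Ioc hab hbc, lintegral_union measurableSet_Ioc (Ioc_disjoint_Ioc_of_le le_rfl)]


/-- the inner double-integral (area of the `(x,y)`-slice), valid for `0 ≤ u ≤ v`, `u+v ≤ 1`. -/
noncomputable def A (v u : ℝ) : ℝ :=
  if 1 + u ≤ 3*v then ((1+u-v)/2)^2
  else (1+u-v)^2/8 + v*(1+u-v)/2 - v^2/2

lemma lint_x (v u : ℝ) (h0 : 0 ≤ u) (huv : u ≤ v) (h1 : u + v ≤ 1) :
    ∫⁻ x, volume (sl1 v u x) = ENNReal.ofReal (A v u) := by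
  set m : ℝ := (1+u-v)/2 with hm
  set c : ℝ := (1+u+v)/2 with hc
  have hm0 : 0 ≤ m := by rw [hm]; linarith
  have hv0 : 0 ≤ v := le_trans h0 huv
  have key : (fun x => volume (sl1 v u x))
      = (Icc 0 m).indicator (fun x => ENNReal.ofReal (min m (c - x))) := by
    funext x
    by_cases hx : x ∈ Icc 0 m
    · rw [indicator_of_mem hx,
        slice_y_eq v u x h0 huv h1 hx.1 (by have := hx.2; rw [hm] at this; linarith),
        Real.volume_Icc, sub_zero, hm, hc]
    · rw [indicator_of_notMem hx, slice_y_empty v u x, measure_empty]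
      intro hcon
      exact hx ⟨hcon.1, by rw [hm]; linarith [hcon.2]⟩
  rw [key, lintegral_indicator measurableSet_Icc,
    setLIntegral_congr (Filter.EventuallyEq.symm Ioc_ae_eq_Icc),
    lint_Ioc 0 m _ hm0 (by fun_prop)
      (fun x hx => le_min hm0 (by rw [hc]; have := hx.2; rw [hm] at this; linarith))]
  congr 1
  by_cases hcase : 1 + u ≤ 3*v
  · have hmlev : m ≤ v := by rw [hm]; linarith
    rw [intervalIntegral.integral_congr (g := fun _ => m)
      (fun x hx => by
        rw [uIcc_of_le hm0] at hx
        exact min_eq_left (by rw [hc]; rw [hm] at hx ⊢; have := hx.2; linarith))]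
    rw [intervalIntegral.integral_const, A, if_pos hcase, smul_eq_mul, sub_zero, hm]
    ring
  · push_neg at hcase
    have hvlem : v ≤ m := by rw [hm]; linarith
    rw [← intervalIntegral.integral_add_adjacent_intervals (b := v)
      (Continuous.intervalIntegrable (by fun_prop) _ _)
      (Continuous.intervalIntegrable (by fun_prop) _ _)]
    rw [intervalIntegral.integral_congr (g := fun _ => m)
      (fun x hx => by
        rw [uIcc_of_le hv0] at hx
        exact min_eq_left (by rw [hc]; rw [hm]; have := hx.2; linarith)),
      intervalIntegral.integral_congr (a := v) (b := m) (g := fun x => c + (-1)*x + 0*x^2 + 0*x^3)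
      (fun x hx => by
        rw [uIcc_of_le hvlem] at hx
        have : min m (c - x) = c - x := min_eq_right (by rw [hc]; rw [hm] at hx ⊢; have := hx.1; linarith)
        rw [this]; ring),
      integral_cubic, intervalIntegral.integral_const, A, if_neg (by push_neg; exact hcase),
      smul_eq_mul, sub_zero, hm, hc]
    ring


lemma sl1_symm (v u x : ℝ) : sl1 v u x = sl1 u v x := by
  ext y; exact Q_symm

lemma inner_eq_right (v u : ℝ) (hv0 : 0 ≤ v) (hvu : v ≤ u) (h1 : u + v ≤ 1) :
    ∫⁻ x, volume (sl1 v u x) = ENNReal.ofReal (A u v) := by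
  simp_rw [sl1_symm v u]
  exact lint_x u v hv0 hvu (by linarith)

lemma inner_zero (v u : ℝ) (h : ¬ (0 ≤ v ∧ 0 ≤ u ∧ u + v ≤ 1)) :
    ∫⁻ x, volume (sl1 v u x) = 0 := by
  simp_rw [slice_y_empty' v u _ h, measure_empty, lintegral_zero]

lemma piece (v a b : ℝ) (hab : a ≤ b) (f : ℝ → ℝ)
    (hcongr : ∀ u ∈ Ioc a b, (∫⁻ x, volume (sl1 v u x)) = ENNReal.ofReal (f u))
    (hf : Continuous f) (hnn : ∀ u ∈ Icc a b, 0 ≤ f u) :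
    (∫⁻ u in Ioc a b, ∫⁻ x, volume (sl1 v u x)) = ENNReal.ofReal (∫ u in a..b, f u) ∧
      0 ≤ ∫ u in a..b, f u := by
  constructor
  · rw [setLIntegral_congr_fun measurableSet_Ioc hcongr]
    exact lint_Ioc a b f hab hf (fun u hu => hnn u (Ioc_subset_Icc_self hu))
  · exact intervalIntegral.integral_nonneg hab hnn

noncomputable def G (v : ℝ) : ℝ≥0∞ := ∫⁻ u, ∫⁻ x, volume (sl1 v u x)

lemma G_support (v : ℝ) (hv0 : 0 ≤ v) (hv1 : v ≤ 1) :
    G v = ∫⁻ u in Ioc 0 (1-v), ∫⁻ x, volume (sl1 v u x) := by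
  rw [G, lintegral_support _ (Icc 0 (1-v)) measurableSet_Icc
    (fun u hu => inner_zero v u (by
      simp only [mem_Icc, not_and_or, not_le] at hu
      rcases hu with h | h
      · intro hcon; linarith [hcon.2.1]
      · intro hcon; linarith [hcon.2.2])),
    setLIntegral_congr (Filter.EventuallyEq.symm Ioc_ae_eq_Icc)]

lemma G_eq1 (v : ℝ) (hv0 : 0 < v) (hv3 : v ≤ 1/3) :
    G v = ENNReal.ofReal (5/72 + 5/24*v + 5/24*v^2 - 91/72*v^3) := by
  have hv0' : 0 ≤ v := hv0.le
  have h13 : v ≤ (1+v)/3 := by linarith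
  have h3v : (1+v)/3 ≤ 1 - v := by linarith
  rw [G_support v hv0' (by linarith), lint_split 0 v (1-v) hv0' (by linarith),
    lint_split v ((1+v)/3) (1-v) h13 h3v]
  obtain ⟨e1, n1⟩ := piece v 0 v hv0'
    (fun u => ((1-v)^2/8 + v*(1-v)/2 - v^2/2) + (1+v)/4*u + (1/8)*u^2 + 0*u^3)
    (fun u hu => by
      rw [lint_x v u hu.1.le hu.2 (by linarith [hu.2]), A,
        if_neg (by push_neg; linarith [hu.1])]
      congr 1; ring)
    (by fun_prop)
    (fun u hu => by nlinarith [sq_nonneg (1+u-v+2*v), hu.1, hu.2, hv0'])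
  obtain ⟨e2, n2⟩ := piece v v ((1+v)/3) h13
    (fun u => ((1+v)^2/8 + (1+v)/4*u + (-7/8)*u^2 + 0*u^3))
    (fun u hu => by
      rw [inner_eq_right v u hv0' hu.1.le (by linarith [hu.2]), A]
      congr 1
      by_cases hif : 1 + v ≤ 3*u
      · rw [if_pos hif]
        have h3 : 3*u = 1+v := le_antisymm (by linarith [hu.2]) hif
        linear_combination ((3*u-(1+v))/8) * h3
      · rw [if_neg hif]; ring)
    (by fun_prop)
    (fun u hu => by nlinarith [sq_nonneg (1+v-u+2*u), hu.1, hu.2, hv0'])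
  obtain ⟨e3, n3⟩ := piece v ((1+v)/3) (1-v) h3v
    (fun u => ((1+v)^2/4 + (-(1+v)/2)*u + (1/4)*u^2 + 0*u^3))
    (fun u hu => by
      rw [inner_eq_right v u hv0' (by linarith [hu.1]) (by linarith [hu.2]), A,
        if_pos (by linarith [hu.1])]
      ring)
    (by fun_prop)
    (fun u hu => by nlinarith [sq_nonneg (1+v-u)])
  rw [e1, e2, e3, ← ENNReal.ofReal_add n2 n3, ← ENNReal.ofReal_add n1 (by positivity)]
  congr 1
  rw [integral_cubic, integral_cubic, integral_cubic]
  ring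


lemma Gpiece (a b : ℝ) (hab : a ≤ b) (f : ℝ → ℝ)
    (hcongr : ∀ v ∈ Ioc a b, G v = ENNReal.ofReal (f v))
    (hf : Continuous f) (hnn : ∀ v ∈ Icc a b, 0 ≤ f v) :
    (∫⁻ v in Ioc a b, G v) = ENNReal.ofReal (∫ v in a..b, f v) ∧ 0 ≤ ∫ v in a..b, f v := by
  constructor
  · rw [setLIntegral_congr_fun measurableSet_Ioc hcongr]
    rw [intervalIntegral.integral_of_le hab, ← ofReal_integral_eq_lintegral_ofReal]
    · exact hf.integrableOn_Ioc
    · exact (ae_restrict_iff' measurableSet_Ioc).2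
        (ae_of_all _ (fun v hv => hnn v (Ioc_subset_Icc_self hv)))
  · exact intervalIntegral.integral_nonneg hab hnn



lemma G_eq2 (v : ℝ) (hv3 : 1/3 < v) (hv2 : v ≤ 1/2) :
    G v = ENNReal.ofReal (1/36 + 7/12*v - 11/12*v^2 - 5/36*v^3) := by
  have hv0' : 0 ≤ v := by linarith
  have h01 : (0:ℝ) ≤ 3*v-1 := by linarith
  have h12 : 3*v-1 ≤ v := by linarith
  have h13 : v ≤ (1+v)/3 := by linarith
  have h3v : (1+v)/3 ≤ 1 - v := by linarith
  rw [G_support v hv0' (by linarith), lint_split 0 (3*v-1) (1-v) h01 (by linarith),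
    lint_split (3*v-1) v (1-v) h12 (by linarith),
    lint_split v ((1+v)/3) (1-v) h13 h3v]
  obtain ⟨e0, n0⟩ := piece v 0 (3*v-1) h01
    (fun u => ((1-v)^2/4 + (1-v)/2*u + (1/4)*u^2 + 0*u^3))
    (fun u hu => by
      rw [lint_x v u hu.1.le (by linarith [hu.2]) (by linarith [hu.2]), A,
        if_pos (by linarith [hu.2])]
      congr 1; ring)
    (by fun_prop)
    (fun u hu => by nlinarith [sq_nonneg (1+u-v)])
  obtain ⟨e1, n1⟩ := piece v (3*v-1) v h12
    (fun u => ((1-v)^2/8 + v*(1-v)/2 - v^2/2) + (1+v)/4*u + (1/8)*u^2 + 0*u^3)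
    (fun u hu => by
      rw [lint_x v u (by linarith [hu.1]) hu.2 (by linarith [hu.2]), A,
        if_neg (by push_neg; linarith [hu.1])]
      congr 1; ring)
    (by fun_prop)
    (fun u hu => by nlinarith [sq_nonneg (1+u-v+2*v), hu.1, hu.2, hv0'])
  obtain ⟨e2, n2⟩ := piece v v ((1+v)/3) h13
    (fun u => ((1+v)^2/8 + (1+v)/4*u + (-7/8)*u^2 + 0*u^3))
    (fun u hu => by
      rw [inner_eq_right v u hv0' hu.1.le (by linarith [hu.2]), A]
      congr 1
      by_cases hif : 1 + v ≤ 3*u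
      · rw [if_pos hif]
        have h3 : 3*u = 1+v := le_antisymm (by linarith [hu.2]) hif
        linear_combination ((3*u-(1+v))/8) * h3
      · rw [if_neg hif]; ring)
    (by fun_prop)
    (fun u hu => by nlinarith [sq_nonneg (1+v-u+2*u), hu.1, hu.2, hv0'])
  obtain ⟨e3, n3⟩ := piece v ((1+v)/3) (1-v) h3v
    (fun u => ((1+v)^2/4 + (-(1+v)/2)*u + (1/4)*u^2 + 0*u^3))
    (fun u hu => by
      rw [inner_eq_right v u hv0' (by linarith [hu.1]) (by linarith [hu.2]), A,
        if_pos (by linarith [hu.1])]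
      congr 1; ring)
    (by fun_prop)
    (fun u hu => by nlinarith [sq_nonneg (1+v-u)])
  rw [e0, e1, e2, e3, ← ENNReal.ofReal_add n2 n3, ← ENNReal.ofReal_add n1 (by positivity),
    ← ENNReal.ofReal_add n0 (by positivity)]
  congr 1
  rw [integral_cubic, integral_cubic, integral_cubic, integral_cubic]
  ring

lemma G_eq3 (v : ℝ) (hv2 : 1/2 < v) (hv1 : v ≤ 1) :
    G v = ENNReal.ofReal (7/12 - 7/4*v + 7/4*v^2 - 7/12*v^3) := by
  have hv0' : 0 ≤ v := by linarith
  have h01 : (0:ℝ) ≤ 1 - v := by linarith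
  rw [G_support v hv0' hv1]
  obtain ⟨e0, _⟩ := piece v 0 (1-v) h01
    (fun u => ((1-v)^2/4 + (1-v)/2*u + (1/4)*u^2 + 0*u^3))
    (fun u hu => by
      rw [lint_x v u hu.1.le (by linarith [hu.2]) (by linarith [hu.2]), A,
        if_pos (by linarith [hu.2])]
      congr 1; ring)
    (by fun_prop)
    (fun u hu => by nlinarith [sq_nonneg (1+u-v)])
  rw [e0]
  congr 1
  rw [integral_cubic]
  ring

lemma G_zero (v : ℝ) (hv : v < 0 ∨ 1 < v) : G v = 0 := by
  rw [G, lintegral_congr (fun u => inner_zero v u (by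
    rintro ⟨a, b, c⟩
    rcases hv with h | h <;> linarith))]
  simp

lemma lint_G : ∫⁻ v, G v = ENNReal.ofReal (17/288) := by
  rw [lintegral_support G (Icc 0 1) measurableSet_Icc
      (fun v hv => G_zero v (by
        simp only [mem_Icc, not_and_or, not_le] at hv
        tauto)),
    setLIntegral_congr (Filter.EventuallyEq.symm Ioc_ae_eq_Icc),
    lint_split 0 (1/3) 1 (by norm_num) (by norm_num),
    lint_split (1/3) (1/2) 1 (by norm_num) (by norm_num)]
  obtain ⟨e1, n1⟩ := Gpiece 0 (1/3) (by norm_num)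
    (fun v => (5/72 + 5/24*v + 5/24*v^2 + (-91/72)*v^3))
    (fun v hv => by rw [G_eq1 v hv.1 hv.2]; congr 1; ring)
    (by fun_prop)
    (fun v hv => by
      have h3 : v^3 ≤ (1/3)^3 := pow_le_pow_left₀ hv.1 hv.2 3
      nlinarith [sq_nonneg v, hv.1])
  obtain ⟨e2, n2⟩ := Gpiece (1/3) (1/2) (by norm_num)
    (fun v => (1/36 + 7/12*v + (-11/12)*v^2 + (-5/36)*v^3))
    (fun v hv => by rw [G_eq2 v hv.1 hv.2]; congr 1; ring)
    (by fun_prop)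
    (fun v hv => by
      have ha : v^2 ≤ v/2 := by nlinarith [hv.1, hv.2]
      have hb : v^3 ≤ v/4 := by nlinarith [hv.1, hv.2]
      nlinarith [hv.1])
  obtain ⟨e3, n3⟩ := Gpiece (1/2) 1 (by norm_num)
    (fun v => (7/12 + (-7/4)*v + 7/4*v^2 + (-7/12)*v^3))
    (fun v hv => by rw [G_eq3 v hv.1 hv.2]; congr 1; ring)
    (by fun_prop)
    (fun v hv => by
      have h := pow_nonneg (by linarith [hv.2] : (0:ℝ) ≤ 1 - v) 3
      nlinarith [h])
  rw [e1, e2, e3, ← ENNReal.ofReal_add n2 n3, ← ENNReal.ofReal_add n1 (by positivity)]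
  congr 1
  rw [integral_cubic, integral_cubic, integral_cubic]
  norm_num


lemma vol_T : volume T = ENNReal.ofReal (17/288) := by
  rw [Measure.volume_eq_prod, Measure.prod_apply measurableSet_T]
  calc ∫⁻ v, volume (Prod.mk v ⁻¹' T) = ∫⁻ v, G v := by
        refine lintegral_congr fun v => ?_
        have hTv : MeasurableSet (Prod.mk v ⁻¹' T) :=
          measurableSet_T.preimage measurable_prodMk_left
        rw [Measure.volume_eq_prod, Measure.prod_apply hTv, G]
        refine lintegral_congr fun u => ?_
        have hTu : MeasurableSet (Prod.mk u ⁻¹' (Prod.mk v ⁻¹' T)) :=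
          hTv.preimage measurable_prodMk_left
        rw [Measure.volume_eq_prod, Measure.prod_apply hTu]
        rfl
    _ = ENNReal.ofReal (17/288) := lint_G

noncomputable def e : (Fin 4 → ℝ) ≃ᵐ ℝ × ℝ × ℝ × ℝ :=
  (MeasurableEquiv.piFinSuccAbove (fun _ : Fin 4 => ℝ) 3).trans
    ((MeasurableEquiv.refl ℝ).prodCongr
      ((MeasurableEquiv.piFinSuccAbove (fun _ : Fin 3 => ℝ) 2).trans
        ((MeasurableEquiv.refl ℝ).prodCongr MeasurableEquiv.finTwoArrow)))

lemma mp_e : MeasurePreserving (⇑e) volume volume := by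
  have h1 := volume_preserving_piFinSuccAbove (fun _ : Fin 4 => ℝ) 3
  have h2 := volume_preserving_piFinSuccAbove (fun _ : Fin 3 => ℝ) 2
  have h3 : MeasurePreserving (⇑(MeasurableEquiv.finTwoArrow : (Fin 2 → ℝ) ≃ᵐ ℝ × ℝ)) volume volume :=
    volume_preserving_finTwoArrow ℝ
  have h4 : MeasurePreserving
      (⇑((MeasurableEquiv.refl ℝ).prodCongr
        (MeasurableEquiv.finTwoArrow : (Fin 2 → ℝ) ≃ᵐ ℝ × ℝ))) volume volume := by
    have := (MeasurePreserving.id (volume : Measure ℝ)).prod h3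
    rw [← Measure.volume_eq_prod] at this
    exact this
  have h5 : MeasurePreserving
      (⇑((MeasurableEquiv.piFinSuccAbove (fun _ : Fin 3 => ℝ) 2).trans
        ((MeasurableEquiv.refl ℝ).prodCongr MeasurableEquiv.finTwoArrow))) volume volume :=
    h4.comp h2
  have h6 : MeasurePreserving
      (⇑((MeasurableEquiv.refl ℝ).prodCongr
        ((MeasurableEquiv.piFinSuccAbove (fun _ : Fin 3 => ℝ) 2).trans
          ((MeasurableEquiv.refl ℝ).prodCongr MeasurableEquiv.finTwoArrow)))) volume volume := by
    have := (MeasurePreserving.id (volume : Measure ℝ)).prod h5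
    rw [← Measure.volume_eq_prod] at this
    exact this
  exact h6.comp h1

lemma e_apply (t : Fin 4 → ℝ) : e t = (t 3, t 2, t 0, t 1) := by
  simp [e, MeasurableEquiv.piFinSuccAbove, MeasurableEquiv.finTwoArrow,
    MeasurableEquiv.prodCongr, MeasurableEquiv.trans, Fin.succAbove]
  refine ⟨rfl, rfl, rfl⟩



lemma S_eq : {t : Fin 4 → ℝ | (∀ k, 0 ≤ t k) ∧
    ∀ i j : Fin 4, i ≠ j → 2 * t i + 2 * t j - t 2 - t 3 ≤ 1} = ⇑e ⁻¹' T := by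
  ext t
  simp only [mem_setOf_eq, mem_preimage, e_apply]
  show _ ↔ Q (t 3) (t 2) (t 0) (t 1)
  unfold Q
  constructor
  · rintro ⟨hpos, hineq⟩
    have h01 := hineq 0 1 (by decide)
    have h02 := hineq 0 2 (by decide)
    have h03 := hineq 0 3 (by decide)
    have h12 := hineq 1 2 (by decide)
    have h13 := hineq 1 3 (by decide)
    have h23 := hineq 2 3 (by decide)
    exact ⟨hpos 3, hpos 2, hpos 0, hpos 1, by linarith, by linarith, by linarith,
      by linarith, by linarith, by linarith⟩
  · rintro ⟨h1, h2, h3, h4, h5, h6, h7, h8, h9, h10⟩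
    constructor
    · intro k
      fin_cases k <;> assumption
    · intro i j hij
      fin_cases i <;> fin_cases j <;> simp_all <;> linarith


end VolPAlpha


/-- The polytope `P_α ⊂ ℝ⁴` defined by `t_k ≥ 0` and `2t_i + 2t_j - t₃ - t₄ ≤ 1` for all
pairs of distinct indices has Lebesgue measure `17/288`; equivalently `α(X) = 17/576`
in the case `q = 0`. (Indices are 0-based: `t₃, t₄` are `t 2, t 3`.) -/
theorem volume_P_alpha :
    volume {t : Fin 4 → ℝ | (∀ k, 0 ≤ t k) ∧
      ∀ i j : Fin 4, i ≠ j → 2 * t i + 2 * t j - t 2 - t 3 ≤ 1} =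
    ENNReal.ofReal (17 / 288) := by

  rw [VolPAlpha.S_eq,
    VolPAlpha.mp_e.measure_preimage VolPAlpha.measurableSet_T.nullMeasurableSet,
    VolPAlpha.vol_T]
end

section
/- For every natural number $q$, let $Q_q \subset \mathbb{R}^4 \times \mathbb{R}^{q+1}$ be the set of $\big((t_1,t_2,t_3,t_4), (s_0, \dots, s_q)\big)$ with all coordinates $\ge 0$ satisfying $t_1 + t_2 - t_i - t_j + \sum_{v=0}^{q} s_v \ge 0$ for all pairs of distinct indices $i,j \in \{1,2,3,4\}$, and $2t_1 + 2t_2 - t_3 - t_4 + 2\sum_{v=0}^{q} s_v \le 1$. Then $(5+q) \cdot \operatorname{vol}(Q_q) = \frac{1}{2\, q!} \int_{P_\alpha} \Big(\frac{1}{2}(1 - 2t_1 - 2t_2 + t_3 + t_4)\Big)^q \, dt_1\, dt_2\, dt_3\, dt_4$, where $P_\alpha = \{t \in \mathbb{R}^4_{\ge 0} : 2t_i + 2t_j - t_3 - t_4 \le 1 \text{ for all distinct } i,j\}$ and volumes/integrals are with respect to Lebesgue measure. -/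
open MeasureTheory Set ENNReal

namespace AlphaAux

lemma meas_sum (n : ℕ) : Measurable (fun s : Fin n → ℝ => ∑ i, s i) :=
  Finset.measurable_sum _ (fun i _ => measurable_pi_apply i)

lemma meas_nonneg_set (n : ℕ) : MeasurableSet {s : Fin n → ℝ | ∀ i, 0 ≤ s i} := by
  rw [show {s : Fin n → ℝ | ∀ i, 0 ≤ s i} = ⋂ i, {s | 0 ≤ s i} by ext; simp]
  exact MeasurableSet.iInter fun i => measurableSet_le measurable_const (measurable_pi_apply i)

lemma simplex_empty (n : ℕ) (b : ℝ) (hb : b < 0) :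
    {s : Fin n → ℝ | (∀ i, 0 ≤ s i) ∧ ∑ i, s i ≤ b} = ∅ := by
  ext s
  simp only [mem_setOf_eq, mem_empty_iff_false, iff_false, not_and]
  intro hs hsum
  have : (0:ℝ) ≤ ∑ i, s i := Finset.sum_nonneg fun i _ => hs i
  linarith

lemma simplex_meas (n : ℕ) (b : ℝ) :
    MeasurableSet {s : Fin n → ℝ | (∀ i, 0 ≤ s i) ∧ ∑ i, s i ≤ b} :=
  (meas_nonneg_set n).inter (measurableSet_le (meas_sum n) measurable_const)

lemma simplex_vol (n : ℕ) (b : ℝ) (hb : 0 ≤ b) :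
    volume {s : Fin n → ℝ | (∀ i, 0 ≤ s i) ∧ ∑ i, s i ≤ b}
      = ENNReal.ofReal (b ^ n / n.factorial) := by
  induction n generalizing b with
  | zero =>
      have h : {s : Fin 0 → ℝ | (∀ i, 0 ≤ s i) ∧ ∑ i, s i ≤ b} = univ := by
        ext s; simp [Finset.sum_empty, hb, Fin.forall_fin_zero_pi]
      rw [h, volume_pi, Measure.pi_univ]
      simp
  | succ n ih =>
      set e := MeasurableEquiv.piFinSuccAbove (fun _ : Fin (n+1) => ℝ) 0 with he
      have hpres : MeasurePreserving e volume volume :=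
        volume_preserving_piFinSuccAbove (fun _ : Fin (n+1) => ℝ) 0
      set A' : Set (ℝ × (Fin n → ℝ)) :=
        {xy | (0 ≤ xy.1 ∧ ∀ j, 0 ≤ xy.2 j) ∧ xy.1 + ∑ j, xy.2 j ≤ b} with hA'
      have hA'meas : MeasurableSet A' := by
        apply MeasurableSet.inter
        · apply MeasurableSet.inter
          · exact measurableSet_le measurable_const measurable_fst
          · show MeasurableSet {xy : ℝ × (Fin n → ℝ) | ∀ j, 0 ≤ xy.2 j}
            rw [Set.setOf_forall]
            exact MeasurableSet.iInter fun j =>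
              measurableSet_le measurable_const (by fun_prop : Measurable fun xy : ℝ × (Fin n → ℝ) => xy.2 j)
        · exact measurableSet_le
            (measurable_fst.add ((meas_sum n).comp measurable_snd)) measurable_const
      have hAeq : {s : Fin (n+1) → ℝ | (∀ i, 0 ≤ s i) ∧ ∑ i, s i ≤ b} = e ⁻¹' A' := by
        ext s
        simp only [mem_preimage, hA', mem_setOf_eq, he,
          MeasurableEquiv.piFinSuccAbove_apply]
        rw [Fin.forall_iff_succAbove (0 : Fin (n+1)), Fin.sum_univ_succAbove s 0]
        rfl
      rw [hAeq, hpres.measure_preimage hA'meas.nullMeasurableSet, Measure.volume_eq_prod,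
        Measure.prod_apply hA'meas]
      have hsec : ∀ x : ℝ, volume (Prod.mk x ⁻¹' A')
          = indicator (Icc 0 b) (fun x => ENNReal.ofReal ((b - x) ^ n / n.factorial)) x := by
        intro x
        rcases le_or_gt 0 x with hx | hx
        · rcases le_or_gt x b with hxb | hxb
          · have : Prod.mk x ⁻¹' A' = {y : Fin n → ℝ | (∀ j, 0 ≤ y j) ∧ ∑ j, y j ≤ b - x} := by
              ext y
              simp only [mem_preimage, hA', mem_setOf_eq]
              constructor
              · rintro ⟨⟨-, h1⟩, h2⟩; exact ⟨h1, by linarith⟩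
              · rintro ⟨h1, h2⟩; exact ⟨⟨hx, h1⟩, by linarith⟩
            rw [this, ih (b - x) (by linarith), indicator_of_mem (mem_Icc.mpr ⟨hx, hxb⟩)]
          · have : Prod.mk x ⁻¹' A' = ∅ := by
              ext y
              simp only [mem_preimage, hA', mem_setOf_eq, mem_empty_iff_false, iff_false, not_and]
              rintro ⟨-, h1⟩
              have : (0:ℝ) ≤ ∑ j, y j := Finset.sum_nonneg fun j _ => h1 j
              intro h2; linarith
            rw [this, measure_empty, indicator_of_notMem (by simp [hxb.not_ge])]
        · have : Prod.mk x ⁻¹' A' = ∅ := by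
            ext y
            simp only [mem_preimage, hA', mem_setOf_eq, mem_empty_iff_false, iff_false, not_and]
            rintro ⟨h0, -⟩; linarith
          rw [this, measure_empty, indicator_of_notMem (by simp [hx.not_ge])]
      rw [lintegral_congr hsec, lintegral_indicator measurableSet_Icc]
      have hint : IntegrableOn (fun x => (b - x) ^ n / n.factorial) (Icc 0 b) volume :=
        (Continuous.integrableOn_Icc (by continuity))
      rw [← ofReal_integral_eq_lintegral_ofReal hint ?nn]
      case nn =>
        refine (ae_restrict_iff' measurableSet_Icc).2 (ae_of_all _ fun x hx => ?_)
        have : 0 ≤ b - x := by linarith [hx.2]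
        positivity
      congr 1
      rw [integral_Icc_eq_integral_Ioc, ← intervalIntegral.integral_of_le hb]
      rw [show (fun x => (b - x) ^ n / n.factorial) = fun x => (b - x) ^ n * (n.factorial : ℝ)⁻¹ by
        funext x; ring]
      rw [intervalIntegral.integral_mul_const]
      rw [intervalIntegral.integral_comp_sub_left (fun x => x ^ n) b, sub_self, sub_zero,
        integral_pow]
      rw [Nat.factorial_succ]
      push_cast
      field_simp
      simp

lemma hyperplane_null (n : ℕ) (a : ℝ) :
    volume {s : Fin (n+1) → ℝ | ∑ i, s i = a} = 0 := by
  set e := MeasurableEquiv.piFinSuccAbove (fun _ : Fin (n+1) => ℝ) 0 with he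
  have hpres : MeasurePreserving e volume volume :=
    volume_preserving_piFinSuccAbove (fun _ : Fin (n+1) => ℝ) 0
  set A' : Set (ℝ × (Fin n → ℝ)) := {xy | xy.1 + ∑ j, xy.2 j = a} with hA'
  have hA'meas : MeasurableSet A' :=
    measurableSet_eq_fun (measurable_fst.add ((meas_sum n).comp measurable_snd))
      measurable_const
  have hAeq : {s : Fin (n+1) → ℝ | ∑ i, s i = a} = e ⁻¹' A' := by
    ext s
    simp only [mem_preimage, hA', mem_setOf_eq, he, MeasurableEquiv.piFinSuccAbove_apply]
    rw [Fin.sum_univ_succAbove s 0]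
    rfl
  rw [hAeq, hpres.measure_preimage hA'meas.nullMeasurableSet, Measure.volume_eq_prod,
    Measure.prod_apply_symm hA'meas]
  have : ∀ y : Fin n → ℝ, volume ((fun x => (x, y)) ⁻¹' A') = 0 := by
    intro y
    have : ((fun x => (x, y)) ⁻¹' A') = {a - ∑ j, y j} := by
      ext x
      simp only [mem_preimage, hA', mem_setOf_eq, mem_singleton_iff]
      constructor <;> intro h <;> linarith
    rw [this, Real.volume_singleton]
  simp only [this, lintegral_const, zero_mul]

lemma shell_vol (n : ℕ) (a c : ℝ) (ha : 0 ≤ a) (hac : a ≤ c) :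
    volume {s : Fin (n+1) → ℝ | (∀ i, 0 ≤ s i) ∧ a ≤ ∑ i, s i ∧ ∑ i, s i ≤ c}
      = ENNReal.ofReal (c ^ (n+1) / (n+1).factorial - a ^ (n+1) / (n+1).factorial) := by
  have hc : 0 ≤ c := le_trans ha hac
  set E : Set (Fin (n+1) → ℝ) := {s | (∀ i, 0 ≤ s i) ∧ ∑ i, s i < a} with hE
  have hEmeas : MeasurableSet E :=
    (meas_nonneg_set (n+1)).inter (measurableSet_lt (meas_sum (n+1)) measurable_const)
  have hEvol : volume E = ENNReal.ofReal (a ^ (n+1) / (n+1).factorial) := by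
    apply le_antisymm
    · rw [← simplex_vol (n+1) a ha]
      exact measure_mono fun s hs => ⟨hs.1, le_of_lt hs.2⟩
    · calc ENNReal.ofReal (a ^ (n+1) / (n+1).factorial)
          = volume {s : Fin (n+1) → ℝ | (∀ i, 0 ≤ s i) ∧ ∑ i, s i ≤ a} :=
            (simplex_vol (n+1) a ha).symm
        _ ≤ volume (E ∪ {s : Fin (n+1) → ℝ | ∑ i, s i = a}) := by
            apply measure_mono
            intro s hs
            rcases lt_or_eq_of_le hs.2 with h | h
            · exact Or.inl ⟨hs.1, h⟩
            · exact Or.inr h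
        _ ≤ volume E + volume {s : Fin (n+1) → ℝ | ∑ i, s i = a} := measure_union_le _ _
        _ = volume E := by rw [hyperplane_null n a, add_zero]
  have hsub : E ⊆ {s : Fin (n+1) → ℝ | (∀ i, 0 ≤ s i) ∧ ∑ i, s i ≤ c} :=
    fun s hs => ⟨hs.1, le_trans (le_of_lt hs.2) hac⟩
  have hdiff : {s : Fin (n+1) → ℝ | (∀ i, 0 ≤ s i) ∧ a ≤ ∑ i, s i ∧ ∑ i, s i ≤ c}
      = {s : Fin (n+1) → ℝ | (∀ i, 0 ≤ s i) ∧ ∑ i, s i ≤ c} \ E := by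
    ext s
    simp only [mem_setOf_eq, mem_diff, hE, not_and, not_lt]
    constructor
    · rintro ⟨h1, h2, h3⟩; exact ⟨⟨h1, h3⟩, fun _ => h2⟩
    · rintro ⟨⟨h1, h3⟩, h2⟩; exact ⟨h1, h2 h1, h3⟩
  rw [hdiff, measure_diff hsub hEmeas.nullMeasurableSet
    (by rw [hEvol]; exact ENNReal.ofReal_ne_top), hEvol, simplex_vol (n+1) c hc,
    ← ENNReal.ofReal_sub _ (by positivity)]

noncomputable section

def mm (t : Fin 4 → ℝ) : ℝ := 2 * t 0 + 2 * t 1 - t 2 - t 3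

def LL (t : Fin 4 → ℝ) : ℝ :=
  0 ⊔ (t 2 - t 1) ⊔ (t 3 - t 1) ⊔ (t 2 - t 0) ⊔ (t 3 - t 0) ⊔ (t 2 + t 3 - t 0 - t 1)

def gg (t : Fin 4 → ℝ) : ℝ := mm t + 2 * LL t

def BB : Set (Fin 4 → ℝ) := {t | (∀ k, 0 ≤ t k) ∧ gg t ≤ 1}

lemma LL_nonneg (t : Fin 4 → ℝ) : 0 ≤ LL t := by
  unfold LL
  exact le_sup_of_le_left (le_sup_of_le_left (le_sup_of_le_left
    (le_sup_of_le_left (le_sup_of_le_left le_rfl))))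

lemma mm_le_gg (t : Fin 4 → ℝ) : mm t ≤ gg t := by
  have := LL_nonneg t; unfold gg; linarith

lemma gg_nonneg {t : Fin 4 → ℝ} (ht : ∀ k, 0 ≤ t k) : 0 ≤ gg t := by
  have h1 : t 2 + t 3 - t 0 - t 1 ≤ LL t := le_sup_right
  have h2 := ht 2; have h3 := ht 3
  unfold gg mm; linarith

lemma LL_le_iff (t : Fin 4 → ℝ) (S : ℝ) :
    LL t ≤ S ↔ ∀ i j : Fin 4, i ≠ j → 0 ≤ t 0 + t 1 - t i - t j + S := by
  unfold LL
  simp only [sup_le_iff]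
  constructor
  · rintro ⟨⟨⟨⟨⟨h0, h1⟩, h2⟩, h3⟩, h4⟩, h5⟩ i j hij
    fin_cases i <;> fin_cases j <;> simp_all <;> linarith
  · intro h
    refine ⟨⟨⟨⟨⟨?_, ?_⟩, ?_⟩, ?_⟩, ?_⟩, ?_⟩
    · have := h 0 1 (by decide); linarith
    · have := h 0 2 (by decide); linarith
    · have := h 0 3 (by decide); linarith
    · have := h 1 2 (by decide); linarith
    · have := h 1 3 (by decide); linarith
    · have := h 2 3 (by decide); linarith

lemma gg_le_one_iff (t : Fin 4 → ℝ) :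
    gg t ≤ 1 ↔ ∀ i j : Fin 4, i ≠ j → 2 * t i + 2 * t j - t 2 - t 3 ≤ 1 := by
  have h : gg t ≤ 1 ↔ LL t ≤ (1 - mm t) / 2 := by
    unfold gg; constructor <;> intro <;> linarith
  rw [h, LL_le_iff]
  refine forall_congr' fun i => forall_congr' fun j => imp_congr_right fun _ => ?_
  unfold mm
  constructor <;> intro <;> linarith

end


noncomputable section

lemma continuous_mm : Continuous mm := by
  unfold mm; fun_prop

lemma continuous_LL : Continuous LL := by
  unfold LL
  apply Continuous.max
  apply Continuous.max
  apply Continuous.max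
  apply Continuous.max
  apply Continuous.max
  all_goals fun_prop

lemma continuous_gg : Continuous gg := by
  unfold gg
  exact continuous_mm.add (continuous_const.mul continuous_LL)

lemma measurableSet_BB : MeasurableSet BB := by
  unfold BB
  apply MeasurableSet.inter
  · exact meas_nonneg_set 4
  · exact measurableSet_le continuous_gg.measurable measurable_const

lemma mm_smul (w : ℝ) (t : Fin 4 → ℝ) : mm (w • t) = w * mm t := by
  unfold mm
  simp only [Pi.smul_apply, smul_eq_mul]
  ring

lemma LL_smul {w : ℝ} (hw : 0 ≤ w) (t : Fin 4 → ℝ) : LL (w • t) = w * LL t := by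
  unfold LL
  simp only [Pi.smul_apply, smul_eq_mul]
  rw [mul_max_of_nonneg _ _ hw, mul_max_of_nonneg _ _ hw, mul_max_of_nonneg _ _ hw,
    mul_max_of_nonneg _ _ hw, mul_max_of_nonneg _ _ hw]
  ring_nf

lemma gg_smul {w : ℝ} (hw : 0 ≤ w) (t : Fin 4 → ℝ) : gg (w • t) = w * gg t := by
  unfold gg
  rw [mm_smul, LL_smul hw]
  ring

end


noncomputable section

def psi (q : ℕ) (t : Fin 4 → ℝ) (w : ℝ) : ℝ :=
  ((w - mm t) / 2) ^ q / (2 * q.factorial)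

def GG (q : ℕ) : (Fin 4 → ℝ) × ℝ → ℝ≥0∞ :=
  Set.indicator {p : (Fin 4 → ℝ) × ℝ | (∀ k, 0 ≤ p.1 k) ∧ gg p.1 ≤ p.2 ∧ p.2 ≤ 1}
    (fun p => ENNReal.ofReal (psi q p.1 p.2))

def KK (q : ℕ) : ℝ≥0∞ := ∫⁻ t in BB, ENNReal.ofReal (psi q t 1)

def Qset (q : ℕ) : Set ((Fin 4 → ℝ) × (Fin (q + 1) → ℝ)) :=
  {x | (∀ k, 0 ≤ x.1 k) ∧ (∀ v, 0 ≤ x.2 v) ∧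
    (∀ i j : Fin 4, i ≠ j →
      0 ≤ x.1 0 + x.1 1 - x.1 i - x.1 j + ∑ v, x.2 v) ∧
    2 * x.1 0 + 2 * x.1 1 - x.1 2 - x.1 3 + 2 * ∑ v, x.2 v ≤ 1}

lemma continuous_psi (q : ℕ) : Continuous (fun p : (Fin 4 → ℝ) × ℝ => psi q p.1 p.2) := by
  unfold psi
  exact (((continuous_snd.sub (continuous_mm.comp continuous_fst)).div_const 2).pow q).div_const _

lemma measurable_GG (q : ℕ) : Measurable (GG q) := by
  unfold GG
  apply Measurable.indicator
  · exact (ENNReal.measurable_ofReal.comp (continuous_psi q).measurable)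
  · apply MeasurableSet.inter
    · show MeasurableSet {p : (Fin 4 → ℝ) × ℝ | ∀ k, 0 ≤ p.1 k}
      rw [setOf_forall]
      exact MeasurableSet.iInter fun k => measurableSet_le measurable_const
        (by fun_prop : Measurable fun p : (Fin 4 → ℝ) × ℝ => p.1 k)
    · exact (measurableSet_le (continuous_gg.measurable.comp measurable_fst) measurable_snd).inter
        (measurableSet_le measurable_snd measurable_const)

lemma measurable_Qset (q : ℕ) : MeasurableSet (Qset q) := by
  have hcoord : ∀ k, Measurable fun x : (Fin 4 → ℝ) × (Fin (q+1) → ℝ) => x.1 k :=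
    fun k => by fun_prop
  have hsum : Measurable fun x : (Fin 4 → ℝ) × (Fin (q+1) → ℝ) => ∑ v, x.2 v := by
    have : (fun x : (Fin 4 → ℝ) × (Fin (q+1) → ℝ) => ∑ v, x.2 v)
        = (fun s : Fin (q+1) → ℝ => ∑ v, s v) ∘ Prod.snd := rfl
    rw [this]
    exact (meas_sum (q+1)).comp measurable_snd
  unfold Qset
  apply MeasurableSet.inter
  · show MeasurableSet {x : (Fin 4 → ℝ) × (Fin (q+1) → ℝ) | ∀ k, 0 ≤ x.1 k}
    rw [setOf_forall]
    exact MeasurableSet.iInter fun k => measurableSet_le measurable_const (hcoord k)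
  apply MeasurableSet.inter
  · show MeasurableSet {x : (Fin 4 → ℝ) × (Fin (q+1) → ℝ) | ∀ v, 0 ≤ x.2 v}
    rw [setOf_forall]
    exact MeasurableSet.iInter fun v => measurableSet_le measurable_const
      (by fun_prop : Measurable fun x : (Fin 4 → ℝ) × (Fin (q+1) → ℝ) => x.2 v)
  apply MeasurableSet.inter
  · show MeasurableSet {x : (Fin 4 → ℝ) × (Fin (q+1) → ℝ) | ∀ i j : Fin 4, i ≠ j →
      0 ≤ x.1 0 + x.1 1 - x.1 i - x.1 j + ∑ v, x.2 v}
    rw [setOf_forall]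
    refine MeasurableSet.iInter fun i => ?_
    rw [setOf_forall]
    refine MeasurableSet.iInter fun j => ?_
    by_cases hij : i = j
    · simp [hij]
    · simp only [ne_eq, hij, not_false_eq_true, true_implies]
      exact measurableSet_le measurable_const
        (((((hcoord 0).add (hcoord 1)).sub (hcoord i)).sub (hcoord j)).add hsum)
  · exact measurableSet_le
      (((((measurable_const.mul (hcoord 0)).add (measurable_const.mul (hcoord 1))).sub
        (hcoord 2)).sub (hcoord 3)).add (measurable_const.mul hsum)) measurable_const

lemma section_vol (q : ℕ) (t : Fin 4 → ℝ) :
    volume (Prod.mk t ⁻¹' Qset q)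
      = Set.indicator BB (fun t => ENNReal.ofReal
          (((1 - mm t)/2) ^ (q+1) / (q+1).factorial - LL t ^ (q+1) / (q+1).factorial)) t := by
  have hsec : Prod.mk t ⁻¹' Qset q
      = {s : Fin (q+1) → ℝ | (∀ k, 0 ≤ t k) ∧ ((∀ v, 0 ≤ s v) ∧
          LL t ≤ ∑ v, s v ∧ ∑ v, s v ≤ (1 - mm t)/2)} := by
    ext s
    simp only [mem_preimage, Qset, mem_setOf_eq]
    constructor
    · rintro ⟨h1, h2, h3, h4⟩
      refine ⟨h1, h2, (LL_le_iff t _).2 h3, ?_⟩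
      unfold mm at *; linarith
    · rintro ⟨h1, h2, h3, h4⟩
      refine ⟨h1, h2, (LL_le_iff t _).1 h3, ?_⟩
      unfold mm at *; linarith
  by_cases ht : t ∈ BB
  · have h1 : ∀ k, 0 ≤ t k := ht.1
    have hLc : LL t ≤ (1 - mm t)/2 := by
      have := ht.2; unfold gg at this; linarith
    rw [hsec, indicator_of_mem ht]
    rw [show {s : Fin (q+1) → ℝ | (∀ k, 0 ≤ t k) ∧ ((∀ v, 0 ≤ s v) ∧
          LL t ≤ ∑ v, s v ∧ ∑ v, s v ≤ (1 - mm t)/2)}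
        = {s : Fin (q+1) → ℝ | (∀ v, 0 ≤ s v) ∧
          LL t ≤ ∑ v, s v ∧ ∑ v, s v ≤ (1 - mm t)/2} by ext s; simp [h1]]
    exact shell_vol q (LL t) ((1 - mm t)/2) (LL_nonneg t) hLc
  · rw [indicator_of_notMem ht]
    by_cases h1 : ∀ k, 0 ≤ t k
    · have hg : 1 < gg t := by
        by_contra h
        exact ht ⟨h1, not_lt.mp h⟩
      have : Prod.mk t ⁻¹' Qset q = ∅ := by
        rw [hsec]
        ext s
        simp only [mem_setOf_eq, mem_empty_iff_false, iff_false]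
        rintro ⟨-, -, h3, h4⟩
        unfold gg at hg
        linarith
      rw [this, measure_empty]
    · have : Prod.mk t ⁻¹' Qset q = ∅ := by
        rw [hsec]
        ext s
        simp only [mem_setOf_eq, mem_empty_iff_false, iff_false]
        rintro ⟨h, -⟩
        exact h1 h
      rw [this, measure_empty]

end


noncomputable section

lemma ftc_step (q : ℕ) {t : Fin 4 → ℝ} (ht : t ∈ BB) :
    ENNReal.ofReal (((1 - mm t)/2) ^ (q+1) / (q+1).factorial
        - LL t ^ (q+1) / (q+1).factorial)
      = ∫⁻ w, GG q (t, w) := by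
  have hg1 : gg t ≤ 1 := ht.2
  have hmg : mm t ≤ gg t := mm_le_gg t
  -- GG as indicator in w
  have hGind : (fun w => GG q (t, w))
      = Set.indicator (Icc (gg t) 1) (fun w => ENNReal.ofReal (psi q t w)) := by
    funext w
    unfold GG
    by_cases hw : w ∈ Icc (gg t) 1
    · rw [Set.indicator_of_mem hw,
        Set.indicator_of_mem (show (t, w) ∈ {p : (Fin 4 → ℝ) × ℝ | (∀ k, 0 ≤ p.1 k) ∧ gg p.1 ≤ p.2 ∧ p.2 ≤ 1} from ⟨ht.1, hw.1, hw.2⟩)]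
    · rw [Set.indicator_of_notMem hw, Set.indicator_of_notMem ?_]
      intro hmem
      exact hw ⟨hmem.2.1, hmem.2.2⟩
  rw [hGind, lintegral_indicator measurableSet_Icc]
  -- FTC
  have hderiv : ∀ w ∈ uIcc (gg t) 1,
      HasDerivAt (fun w => ((w - mm t)/2) ^ (q+1) / ((q+1).factorial : ℝ)) (psi q t w) w := by
    intro w _
    have h1 : HasDerivAt (fun w : ℝ => (w - mm t)/2) (1/2) w := by
      simpa using ((hasDerivAt_id w).sub_const (mm t)).div_const 2
    have h2 := (h1.pow (q+1)).div_const ((q+1).factorial : ℝ)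
    refine h2.congr_deriv ?_
    unfold psi
    rw [Nat.factorial_succ]
    push_cast
    have hfq : (q.factorial : ℝ) ≠ 0 := Nat.cast_ne_zero.2 q.factorial_ne_zero
    field_simp
  have hcont : Continuous fun w => psi q t w := by
    unfold psi; fun_prop
  have hftc := intervalIntegral.integral_eq_sub_of_hasDerivAt hderiv
    (hcont.intervalIntegrable _ _)
  have hreal : ∫ w in Icc (gg t) 1, psi q t w
      = ((1 - mm t)/2) ^ (q+1) / (q+1).factorial - LL t ^ (q+1) / (q+1).factorial := by
    rw [integral_Icc_eq_integral_Ioc, ← intervalIntegral.integral_of_le hg1, hftc]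
    have h1 : ((1 : ℝ) - mm t)/2 = (1 - mm t)/2 := rfl
    have h2 : (gg t - mm t)/2 = LL t := by unfold gg; ring
    rw [h2]
  rw [← hreal]
  rw [← ofReal_integral_eq_lintegral_ofReal]
  · exact (hcont.integrableOn_Icc)
  · refine (ae_restrict_iff' measurableSet_Icc).2 (ae_of_all _ fun w hw => ?_)
    have : 0 ≤ w - mm t := by linarith [hw.1]
    unfold psi
    positivity

lemma vol_Qset (q : ℕ) :
    volume (Qset q) = ∫⁻ t, ∫⁻ w, GG q (t, w) := by
  rw [Measure.volume_eq_prod, Measure.prod_apply (measurable_Qset q)]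
  apply lintegral_congr
  intro t
  rw [section_vol q t]
  by_cases ht : t ∈ BB
  · rw [indicator_of_mem ht, ftc_step q ht]
  · rw [indicator_of_notMem ht]
    symm
    have hzero : ∀ w, GG q (t, w) = 0 := by
      intro w
      unfold GG
      apply indicator_of_notMem
      intro hmem
      by_cases h1 : ∀ k, 0 ≤ t k
      · exact ht ⟨h1, le_trans hmem.2.1 hmem.2.2⟩
      · exact h1 hmem.1
    simp only [hzero, lintegral_zero]

end


noncomputable section
open Module

lemma inner_w (q : ℕ) {w : ℝ} (hw0 : 0 < w) (hw1 : w ≤ 1) :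
    ∫⁻ t, GG q (t, w) = ENNReal.ofReal (w ^ (4+q)) * KK q := by
  have hwne : w ≠ 0 := ne_of_gt hw0
  have hF : Measurable fun t => GG q (t, w) :=
    (measurable_GG q).comp (measurable_id.prodMk measurable_const)
  have hrank : finrank ℝ (Fin 4 → ℝ) = 4 := by
    simp [finrank_fintype_fun_eq_card]
  -- pointwise identity after scaling
  have hpt : ∀ τ : Fin 4 → ℝ, GG q (w • τ, w)
      = ENNReal.ofReal (w ^ q) * Set.indicator BB (fun τ => ENNReal.ofReal (psi q τ 1)) τ := by
    intro τ
    unfold GG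
    by_cases hτ : τ ∈ BB
    · have hmem : (w • τ, w) ∈ {p : (Fin 4 → ℝ) × ℝ |
          (∀ k, 0 ≤ p.1 k) ∧ gg p.1 ≤ p.2 ∧ p.2 ≤ 1} := by
        refine ⟨fun k => ?_, ?_, hw1⟩
        · have := hτ.1 k
          simp only [Pi.smul_apply, smul_eq_mul]
          positivity
        · rw [gg_smul (le_of_lt hw0)]
          calc w * gg τ ≤ w * 1 := by
                have := hτ.2
                nlinarith
            _ = w := mul_one w
      rw [Set.indicator_of_mem hmem, Set.indicator_of_mem hτ]
      rw [← ENNReal.ofReal_mul (by positivity)]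
      congr 1
      unfold psi
      rw [mm_smul]
      rw [show (w - w * mm τ)/2 = w * ((1 - mm τ)/2) by ring, mul_pow]
      ring
    · have hnmem : (w • τ, w) ∉ {p : (Fin 4 → ℝ) × ℝ |
          (∀ k, 0 ≤ p.1 k) ∧ gg p.1 ≤ p.2 ∧ p.2 ≤ 1} := by
        intro hmem
        apply hτ
        constructor
        · intro k
          have := hmem.1 k
          simp only [Pi.smul_apply, smul_eq_mul] at this
          nlinarith
        · have := hmem.2.1
          rw [gg_smul (le_of_lt hw0)] at this
          nlinarith
      rw [Set.indicator_of_notMem hnmem, Set.indicator_of_notMem hτ, mul_zero]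
  -- scaling of lintegral
  have hmap := Measure.map_addHaar_smul (volume : Measure (Fin 4 → ℝ)) hwne
  have hcomp : ∫⁻ τ, GG q (w • τ, w)
      = ENNReal.ofReal (|(w ^ 4)⁻¹|) * ∫⁻ t, GG q (t, w) := by
    have h := lintegral_map (μ := (volume : Measure (Fin 4 → ℝ))) hF
      (measurable_const_smul (M := ℝ) w : Measurable fun τ : Fin 4 → ℝ => w • τ)
    rw [← h, hmap, hrank, lintegral_smul_measure, smul_eq_mul]
  have hval : ∫⁻ τ, GG q (w • τ, w) = ENNReal.ofReal (w ^ q) * KK q := by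
    rw [lintegral_congr hpt, lintegral_const_mul' _ _ ENNReal.ofReal_ne_top,
      lintegral_indicator measurableSet_BB]
    rfl
  have habs : |(w ^ 4)⁻¹| = (w ^ 4)⁻¹ := abs_of_pos (by positivity)
  rw [hval, habs] at hcomp
  have hkey : ENNReal.ofReal (w ^ 4) * (ENNReal.ofReal ((w ^ 4)⁻¹) * ∫⁻ t, GG q (t, w))
      = ENNReal.ofReal (w ^ 4) * (ENNReal.ofReal (w ^ q) * KK q) := by rw [← hcomp]
  rw [← mul_assoc, ← ENNReal.ofReal_mul (by positivity), mul_inv_cancel₀ (by positivity),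
    ENNReal.ofReal_one, one_mul] at hkey
  rw [hkey, ← mul_assoc, ← ENNReal.ofReal_mul (by positivity), ← pow_add]

end


noncomputable section

lemma vol_Qset' (q : ℕ) :
    volume (Qset q) = ENNReal.ofReal (1 / (5 + q : ℝ)) * KK q := by
  rw [vol_Qset q]
  rw [lintegral_lintegral_swap (f := fun t w => GG q (t, w))
    (by exact ((measurable_GG q).comp (measurable_fst.prodMk measurable_snd)).aemeasurable)]
  have hne : ∀ᵐ w : ℝ, w ≠ 0 := by
    rw [ae_iff]
    have h : {w : ℝ | ¬ w ≠ 0} = {0} := by ext w; simp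
    rw [h]; exact measure_singleton 0
  have hae : (fun w => ∫⁻ t, GG q (t, w))
      =ᵐ[volume] Set.indicator (Ioc 0 1) (fun w => ENNReal.ofReal (w ^ (4+q)) * KK q) := by
    filter_upwards [hne] with w hw
    by_cases hmem : w ∈ Ioc (0:ℝ) 1
    · rw [indicator_of_mem hmem, inner_w q hmem.1 hmem.2]
    · rw [indicator_of_notMem hmem]
      have hzero : ∀ t, GG q (t, w) = 0 := by
        intro t
        unfold GG
        apply indicator_of_notMem
        rintro ⟨h1, h2, h3⟩
        simp only [mem_Ioc, not_and, not_le] at hmem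
        by_cases hpos : 0 < w
        · have := hmem hpos
          linarith
        · have hg0 : 0 ≤ gg t := gg_nonneg h1
          have hwlt : w < 0 := lt_of_le_of_ne (not_lt.mp hpos) hw
          linarith
      simp only [hzero, lintegral_zero]
  rw [lintegral_congr_ae hae, lintegral_indicator measurableSet_Ioc,
    lintegral_mul_const _ (by fun_prop : Measurable fun w : ℝ => ENNReal.ofReal (w ^ (4+q)))]
  have hcalc : ∫⁻ w in Ioc (0:ℝ) 1, ENNReal.ofReal (w ^ (4+q))
      = ENNReal.ofReal (1/(5 + q : ℝ)) := by
    rw [← ofReal_integral_eq_lintegral_ofReal]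
    · congr 1
      rw [← intervalIntegral.integral_of_le zero_le_one, integral_pow]
      rw [one_pow, zero_pow (by omega : 4 + q + 1 ≠ 0)]
      push_cast
      ring
    · exact ((continuous_pow _).integrableOn_Icc).mono_set Ioc_subset_Icc_self
    · refine (ae_restrict_iff' measurableSet_Ioc).2 (ae_of_all _ fun w hw => ?_)
      have := hw.1
      positivity
  rw [hcalc, mul_comm]

end


end AlphaAux

open AlphaAux

/-- `α_{A₁₂}(X) = α(X)`: `(5+q)` times the volume of the polytope `Q_q` in
`ℝ⁴ × ℝ^{q+1}` cut out by the effective cone and the log-anticanonical class equals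
`(1/(2 q!)) ∫_{P_α} ((1-2t₁-2t₂+t₃+t₄)/2)^q dt`. (Indices 0-based.) -/
theorem alpha_A12_eq_alpha (q : ℕ) :
    ((5 + q : ℕ) : ℝ) *
      (volume {x : (Fin 4 → ℝ) × (Fin (q + 1) → ℝ) |
        (∀ k, 0 ≤ x.1 k) ∧ (∀ v, 0 ≤ x.2 v) ∧
        (∀ i j : Fin 4, i ≠ j →
          0 ≤ x.1 0 + x.1 1 - x.1 i - x.1 j + ∑ v, x.2 v) ∧
        2 * x.1 0 + 2 * x.1 1 - x.1 2 - x.1 3 + 2 * ∑ v, x.2 v ≤ 1}).toReal =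
    (1 / (2 * (q.factorial : ℝ))) *
      ∫ t in {t : Fin 4 → ℝ | (∀ k, 0 ≤ t k) ∧
          ∀ i j : Fin 4, i ≠ j → 2 * t i + 2 * t j - t 2 - t 3 ≤ 1},
        ((1 / 2) * (1 - 2 * t 0 - 2 * t 1 + t 2 + t 3)) ^ q := by
  have hset : {x : (Fin 4 → ℝ) × (Fin (q + 1) → ℝ) |
        (∀ k, 0 ≤ x.1 k) ∧ (∀ v, 0 ≤ x.2 v) ∧
        (∀ i j : Fin 4, i ≠ j →
          0 ≤ x.1 0 + x.1 1 - x.1 i - x.1 j + ∑ v, x.2 v) ∧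
        2 * x.1 0 + 2 * x.1 1 - x.1 2 - x.1 3 + 2 * ∑ v, x.2 v ≤ 1} = Qset q := rfl
  have hBBset : {t : Fin 4 → ℝ | (∀ k, 0 ≤ t k) ∧
      ∀ i j : Fin 4, i ≠ j → 2 * t i + 2 * t j - t 2 - t 3 ≤ 1} = BB := by
    ext t
    exact and_congr_right fun _ => (gg_le_one_iff t).symm
  rw [hset, hBBset, vol_Qset' q]
  set J := ∫⁻ t in BB, ENNReal.ofReal (((1 - mm t)/2) ^ q) with hJ
  have hKK : KK q = ENNReal.ofReal (1/(2 * (q.factorial : ℝ))) * J := by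
    unfold KK
    rw [hJ, ← lintegral_const_mul' _ _ ENNReal.ofReal_ne_top]
    apply setLIntegral_congr_fun measurableSet_BB
    intro t ht
    dsimp only
    rw [← ENNReal.ofReal_mul (by positivity)]
    congr 1
    unfold psi
    ring
  have hint_eq : ∫ t in BB, ((1/2 : ℝ) * (1 - 2*t 0 - 2*t 1 + t 2 + t 3)) ^ q
      = ∫ t in BB, ((1 - mm t)/2) ^ q := by
    apply setIntegral_congr_fun measurableSet_BB
    intro t _
    unfold mm
    ring
  have hnonneg : 0 ≤ᵐ[volume.restrict BB] fun t => ((1 - mm t)/2) ^ q := by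
    refine (ae_restrict_iff' measurableSet_BB).2 (ae_of_all _ fun t ht => ?_)
    have h1 : mm t ≤ 1 := le_trans (mm_le_gg t) ht.2
    have h2 : (0:ℝ) ≤ (1 - mm t)/2 := by linarith
    positivity
  have hmeas : AEStronglyMeasurable (fun t : Fin 4 → ℝ => ((1 - mm t)/2) ^ q)
      (volume.restrict BB) :=
    (((continuous_const.sub continuous_mm).div_const 2).pow q).aestronglyMeasurable
  have hRHS : ∫ t in BB, ((1 - mm t)/2) ^ q = J.toReal := by
    rw [integral_eq_lintegral_of_nonneg_ae hnonneg hmeas]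
  rw [hint_eq, hRHS, hKK]
  have hfq0 : (0:ℝ) < (q.factorial : ℝ) := by exact_mod_cast q.factorial_pos
  rw [ENNReal.toReal_mul, ENNReal.toReal_mul, ENNReal.toReal_ofReal (by positivity),
    ENNReal.toReal_ofReal (by positivity)]
  have h5q : (5 + q : ℝ) ≠ 0 := by positivity
  have hfq : (2 * (q.factorial : ℝ)) ≠ 0 := by positivity
  push_cast
  field_simp
end
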